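/- arXiv:1105.2033 — 6 statements merged into one kernel-verified Lean document; each statement's English description precedes it below -/
import Mathlib

section
/- Let l, T > 0, let α : [0,l] → ℝ be continuous with 0 < α(x) < 1 for all x ∈ (0,l), let k be continuously differentiable in x and continuous on Q̄_T = [0,l]×[0,T] with k(x,t) ≥ c₁ > 0, let q, f be continuous on Q̄_T with q(x,t) ≥ 0, and let u ∈ C^{2,1}(Q̄_T) satisfy ∂_{0t}^{α(x)} u = (k(x,t)u_x)_x − q(x,t)u + f(x,t) on (0,l)×(0,T], with u(0,t) = u(l,t) = 0 for 0 ≤ t ≤ T. Then for every t ∈ (0,T]: ∫_0^l ∂_{0t}^{α(x)} u²(x,t) dx + c₁ ‖u_x(·,t)‖₀² ≤ (l²/(2c₁)) ‖f(·,t)‖₀². -/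
open MeasureTheory intervalIntegral Set Topology Filter

/-- Caputo fractional derivative in time of order `β` of a function whose
time derivative is `ut`: `(1/Γ(1-β)) ∫_0^t ut(τ) (t-τ)^(-β) dτ`. -/
noncomputable def caputoT (β : ℝ) (ut : ℝ → ℝ) (t : ℝ) : ℝ :=
  (1 / Real.Gamma (1 - β)) * ∫ τ in (0:ℝ)..t, ut τ * (t - τ) ^ (-β)

/-- Riemann–Liouville fractional integral of order `β` of `g`:
`D^{-β} g(t) = (1/Γ(β)) ∫_0^t (t-s)^{β-1} g(s) ds`. -/
noncomputable def rlInt (β : ℝ) (g : ℝ → ℝ) (t : ℝ) : ℝ :=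
  (1 / Real.Gamma β) * ∫ s in (0:ℝ)..t, (t - s) ^ (β - 1) * g s

lemma kernIntegrable {t β : ℝ} (hβ : β < 1) :
    IntervalIntegrable (fun τ => (t - τ) ^ (-β)) volume 0 t := by
  have h := (intervalIntegral.intervalIntegrable_rpow' (a := t - 0) (b := t - t)
    (by linarith : (-1:ℝ) < -β)).comp_sub_left t
  simpa using h

lemma kernMeasurable (t β : ℝ) :
    Measurable (fun τ : ℝ => (t - τ) ^ (-β)) :=
  (measurable_const.sub measurable_id).pow measurable_const

lemma kernIntegral {t β : ℝ} (ht : 0 ≤ t) (hβ : β < 1) :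
    ∫ τ in (0:ℝ)..t, (t - τ) ^ (-β) = t ^ (1 - β) / (1 - β) := by
  have h := intervalIntegral.integral_comp_sub_left (a := (0:ℝ)) (b := t)
    (fun s : ℝ => s ^ (-β)) t
  simp only [sub_self, sub_zero] at h
  rw [h, integral_rpow (Or.inl (by linarith))]
  rw [Real.zero_rpow (by linarith : -β + 1 ≠ 0)]
  ring_nf

-- bounded continuous-on-Icc function times kernel is interval integrable
lemma mul_kern_integrable {t β : ℝ} (ht : 0 < t) (hβ : β < 1)
    {φ : ℝ → ℝ} (hφ : ContinuousOn φ (Icc 0 t)) :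
    IntervalIntegrable (fun τ => φ τ * (t - τ) ^ (-β)) volume 0 t := by
  obtain ⟨M, hM⟩ : ∃ M, ∀ τ ∈ Icc (0:ℝ) t, |φ τ| ≤ M := by
    rcases (isCompact_Icc.exists_bound_of_continuousOn hφ) with ⟨M, hM⟩
    exact ⟨M, fun τ hτ => by simpa using hM τ hτ⟩
  have hMint : IntervalIntegrable (fun τ => M * (t - τ) ^ (-β)) volume 0 t :=
    (kernIntegrable hβ).const_mul M
  apply hMint.mono_fun
  · have hsub : Set.uIoc (0:ℝ) t ⊆ Icc 0 t := by
      rw [uIoc_of_le ht.le]; exact Ioc_subset_Icc_self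
    exact ((hφ.mono hsub).aestronglyMeasurable
      measurableSet_uIoc).mul (kernMeasurable t β).aestronglyMeasurable.restrict
  · filter_upwards [ae_restrict_mem measurableSet_uIoc] with τ hτ
    rw [uIoc_of_le ht.le] at hτ
    have h1 : 0 ≤ (t - τ) ^ (-β) := Real.rpow_nonneg (by linarith [hτ.2]) _
    have h2 : |φ τ| ≤ M := hM τ (Ioc_subset_Icc_self hτ)
    simp only [Real.norm_eq_abs, abs_mul, abs_of_nonneg h1]
    calc |φ τ| * (t-τ)^(-β) ≤ M * (t-τ)^(-β) := by nlinarith [abs_nonneg (φ τ)]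
    _ ≤ |M| * (t-τ)^(-β) := by nlinarith [le_abs_self M]

lemma g_contOn (t β : ℝ) : ContinuousOn (fun τ : ℝ => (t - τ) ^ (-β)) (Iio t) := by
  intro τ hτ
  have h1 : ContinuousAt (fun τ : ℝ => t - τ) τ := (continuous_const.sub continuous_id).continuousAt
  exact ((Real.continuousAt_rpow_const (t - τ) (-β)
    (Or.inl (ne_of_gt (sub_pos.mpr hτ)))).comp h1).continuousWithinAt

lemma sq_diff_integral_nonpos {t β : ℝ} (ht : 0 < t) (hβ0 : 0 < β) (hβ1 : β < 1)
    {v v' : ℝ → ℝ} (hv' : ContinuousOn v' (Icc 0 t))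
    (hd : ∀ τ ∈ Icc (0:ℝ) t, HasDerivWithinAt v (v' τ) (Icc 0 t) τ) :
    ∫ τ in (0:ℝ)..t, (-2 * v' τ * (v t - v τ)) * (t - τ) ^ (-β) ≤ 0 := by
  set g : ℝ → ℝ := fun τ => (t - τ) ^ (-β) with hg
  set w : ℝ → ℝ := fun τ => (v t - v τ) ^ 2 with hw
  set w' : ℝ → ℝ := fun τ => -2 * v' τ * (v t - v τ) with hw'
  have hvc : ContinuousOn v (Icc 0 t) := fun τ hτ => (hd τ hτ).continuousWithinAt
  -- bound on v'
  obtain ⟨L, hL0, hL⟩ : ∃ L, 0 ≤ L ∧ ∀ τ ∈ Icc (0:ℝ) t, |v' τ| ≤ L := by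
    rcases isCompact_Icc.exists_bound_of_continuousOn hv' with ⟨M, hM⟩
    exact ⟨max M 0, le_max_right _ _, fun τ hτ =>
      le_trans (by simpa using hM τ hτ) (le_max_left _ _)⟩
  -- Lipschitz estimate
  have hLip : ∀ s ∈ Icc (0:ℝ) t, |v t - v s| ≤ L * (t - s) := by
    intro s hs
    have := Convex.norm_image_sub_le_of_norm_hasDerivWithin_le hd
      (fun τ hτ => by simpa using hL τ hτ) (convex_Icc 0 t) hs (right_mem_Icc.mpr ht.le)
    simpa [abs_of_nonneg (sub_nonneg.mpr hs.2)] using this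
  have hwle : ∀ s ∈ Icc (0:ℝ) t, w s ≤ (L * (t - s)) ^ 2 := by
    intro s hs
    have := hLip s hs
    have h0 : w s = |v t - v s| ^ 2 := (sq_abs _).symm
    rw [h0]
    exact pow_le_pow_left₀ (abs_nonneg _) this 2
  have hw'c : ContinuousOn w' (Icc 0 t) :=
    ((continuousOn_const.mul hv').mul (continuousOn_const.sub hvc))
  -- integrability of w' * g on [0,t]
  have hint : IntervalIntegrable (fun τ => w' τ * g τ) volume 0 t :=
    mul_kern_integrable ht hβ1 hw'c
  -- the truncated estimate
  have hstep : ∀ s ∈ Ioo (0:ℝ) t,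
      (∫ τ in (0:ℝ)..s, w' τ * g τ) ≤ L ^ 2 * (t - s) ^ (2 - β) := by
    intro s hs
    set g' : ℝ → ℝ := fun τ => β * (t - τ) ^ (-β - 1) with hg'
    have hsub : Icc (0:ℝ) s ⊆ Iio t := fun τ hτ => lt_of_le_of_lt hτ.2 hs.2
    have hcontwg : ContinuousOn (fun τ => w τ * g τ) (Icc 0 s) := by
      refine ContinuousOn.mul ?_ ((g_contOn t β).mono hsub)
      exact ((continuousOn_const.sub hvc).pow 2).mono (Icc_subset_Icc le_rfl hs.2.le)
    have hg'c : ContinuousOn g' (Icc 0 s) := by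
      refine continuousOn_const.mul ?_
      intro τ hτ
      have h1 : ContinuousAt (fun τ : ℝ => t - τ) τ :=
        (continuous_const.sub continuous_id).continuousAt
      exact ((Real.continuousAt_rpow_const (t - τ) (-β - 1)
        (Or.inl (ne_of_gt (sub_pos.mpr (hsub hτ))))).comp h1).continuousWithinAt
    -- derivative of w * g on Ioo 0 s
    have hderiv : ∀ τ ∈ Ioo (0:ℝ) s,
        HasDerivWithinAt (fun τ => w τ * g τ) (w' τ * g τ + w τ * g' τ) (Ioi τ) τ := by
      intro τ hτ
      have hτt : τ ∈ Ioo (0:ℝ) t := ⟨hτ.1, hτ.2.trans hs.2⟩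
      have hvd : HasDerivAt v (v' τ) τ :=
        (hd τ (Ioo_subset_Icc_self hτt)).hasDerivAt (Icc_mem_nhds hτt.1 hτt.2)
      have hwd : HasDerivAt w (w' τ) τ := by
        have h1 : HasDerivAt (fun z => (v t - v z)) (-v' τ) τ := by
          exact ((hasDerivAt_const τ (v t)).sub hvd).congr_deriv (by ring)
        have := h1.fun_pow 2
        simp only [Nat.cast_ofNat, pow_one] at this
        refine this.congr_deriv ?_
        simp only [hw']
        ring
      have hgd : HasDerivAt g (g' τ) τ := by
        have h1 : HasDerivAt (fun z : ℝ => t - z) (-1) τ := by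
          exact ((hasDerivAt_const τ t).sub (hasDerivAt_id τ)).congr_deriv (by ring)
        have h2 : HasDerivAt (fun y : ℝ => y ^ (-β)) (-β * (t - τ) ^ (-β - 1)) (t - τ) :=
          Real.hasDerivAt_rpow_const (Or.inl (ne_of_gt (sub_pos.mpr hτt.2)))
        have := h2.comp τ h1
        refine this.congr_deriv ?_
        simp only [hg']
        ring
      exact ((hwd.mul hgd).congr_deriv (by ring)).hasDerivWithinAt
    have hintegr : IntervalIntegrable (fun τ => w' τ * g τ + w τ * g' τ) volume 0 s := by
      apply ContinuousOn.intervalIntegrable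
      rw [uIcc_of_le hs.1.le]
      refine ContinuousOn.add ?_ ?_
      · exact (hw'c.mono (Icc_subset_Icc le_rfl hs.2.le)).mul ((g_contOn t β).mono hsub)
      · exact (((continuousOn_const.sub hvc).pow 2).mono
          (Icc_subset_Icc le_rfl hs.2.le)).mul hg'c
    have hftc := intervalIntegral.integral_eq_sub_of_hasDeriv_right_of_le hs.1.le
      hcontwg hderiv hintegr
    -- split the integral
    have hi1 : IntervalIntegrable (fun τ => w' τ * g τ) volume 0 s := by
      apply hint.mono_set
      rw [uIcc_of_le hs.1.le, uIcc_of_le ht.le]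
      exact Icc_subset_Icc le_rfl hs.2.le
    have hi2 : IntervalIntegrable (fun τ => w τ * g' τ) volume 0 s := by
      apply ContinuousOn.intervalIntegrable
      rw [uIcc_of_le hs.1.le]
      exact (((continuousOn_const.sub hvc).pow 2).mono
        (Icc_subset_Icc le_rfl hs.2.le)).mul hg'c
    rw [intervalIntegral.integral_add hi1 hi2] at hftc
    have hpos2 : 0 ≤ ∫ τ in (0:ℝ)..s, w τ * g' τ := by
      apply intervalIntegral.integral_nonneg hs.1.le
      intro τ hτ
      have h1 : 0 ≤ w τ := sq_nonneg _
      have h2 : 0 ≤ g' τ := mul_nonneg hβ0.le (Real.rpow_nonneg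
        (sub_nonneg.mpr (le_trans hτ.2 hs.2.le)) _)
      exact mul_nonneg h1 h2
    have hw0g0 : 0 ≤ w 0 * g 0 := mul_nonneg (sq_nonneg _) (Real.rpow_nonneg (by linarith) _)
    have hbound : w s * g s ≤ L ^ 2 * (t - s) ^ (2 - β) := by
      have h1 : w s ≤ (L * (t - s)) ^ 2 := hwle s (Ioo_subset_Icc_self hs)
      have h2 : (0:ℝ) < t - s := sub_pos.mpr hs.2
      have h3 : (0:ℝ) ≤ g s := Real.rpow_nonneg h2.le _
      have h4 : w s * g s ≤ (L * (t - s)) ^ 2 * g s :=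
        mul_le_mul_of_nonneg_right h1 h3
      refine h4.trans (le_of_eq ?_)
      have : ((t - s) ^ 2) * (t - s) ^ (-β) = (t - s) ^ (2 - β) := by
        rw [← Real.rpow_natCast (t - s) 2, ← Real.rpow_add h2]
        norm_num
        ring_nf
      calc (L * (t - s)) ^ 2 * g s = L ^ 2 * (((t - s) ^ 2) * (t - s) ^ (-β)) := by ring
        _ = L ^ 2 * (t - s) ^ (2 - β) := by rw [this]
    linarith [hftc, hpos2, hw0g0, hbound]
  -- pass to the limit s → t⁻
  have hne : (𝓝[Ioo (0:ℝ) t] t).NeBot := by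
    rw [nhdsWithin_Ioo_eq_nhdsLT ht]
    exact inferInstance
  have hFcont : ContinuousOn (fun s => ∫ τ in (0:ℝ)..s, w' τ * g τ) (Icc 0 t) := by
    have := intervalIntegral.continuousOn_primitive_interval'
      (μ := volume) hint (left_mem_uIcc)
    rwa [uIcc_of_le ht.le] at this
  have hFt : Filter.Tendsto (fun s => ∫ τ in (0:ℝ)..s, w' τ * g τ) (𝓝[Ioo (0:ℝ) t] t)
      (𝓝 (∫ τ in (0:ℝ)..t, w' τ * g τ)) := by
    have := (hFcont t (right_mem_Icc.mpr ht.le)).tendsto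
    exact this.mono_left (nhdsWithin_mono t Ioo_subset_Icc_self)
  have hGt : Filter.Tendsto (fun s => L ^ 2 * (t - s) ^ (2 - β)) (𝓝[Ioo (0:ℝ) t] t)
      (𝓝 0) := by
    have h1 : Filter.Tendsto (fun s : ℝ => t - s) (𝓝 t) (𝓝 0) := by
      have : Filter.Tendsto (fun s : ℝ => t - s) (𝓝 t) (𝓝 (t - t)) :=
        tendsto_const_nhds.sub tendsto_id
      simpa using this
    have h2 : ContinuousAt (fun z : ℝ => z ^ (2 - β)) 0 :=
      Real.continuousAt_rpow_const 0 (2 - β) (Or.inr (by linarith))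
    have h3 : Filter.Tendsto (fun s : ℝ => (t - s) ^ (2 - β)) (𝓝 t) (𝓝 ((0:ℝ) ^ (2 - β))) :=
      (h2.tendsto.comp h1)
    rw [Real.zero_rpow (by linarith : (2:ℝ) - β ≠ 0)] at h3
    have := h3.const_mul (L ^ 2)
    rw [mul_zero] at this
    exact this.mono_left nhdsWithin_le_nhds
  have hle : (∫ τ in (0:ℝ)..t, w' τ * g τ) ≤ 0 :=
    le_of_tendsto_of_tendsto hFt hGt
      (eventually_nhdsWithin_of_forall (fun s hs => hstep s hs))
  exact hle

lemma caputo_sq_le {t β : ℝ} (ht : 0 < t) (hβ0 : 0 < β) (hβ1 : β < 1)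
    {v v' : ℝ → ℝ} (hv' : ContinuousOn v' (Icc 0 t))
    (hd : ∀ τ ∈ Icc (0:ℝ) t, HasDerivWithinAt v (v' τ) (Icc 0 t) τ) :
    caputoT β (fun τ => 2 * v τ * v' τ) t ≤ 2 * v t * caputoT β v' t := by
  have hvc : ContinuousOn v (Icc 0 t) := fun τ hτ => (hd τ hτ).continuousWithinAt
  have hΓ : 0 < Real.Gamma (1 - β) := Real.Gamma_pos_of_pos (by linarith)
  have h2 : IntervalIntegrable (fun τ => (2 * v τ * v' τ) * (t - τ)^(-β)) volume 0 t :=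
    mul_kern_integrable ht hβ1 ((continuousOn_const.mul hvc).mul hv')
  have h1 : IntervalIntegrable (fun τ => v' τ * (t - τ)^(-β)) volume 0 t :=
    mul_kern_integrable ht hβ1 hv'
  have hD : IntervalIntegrable (fun τ => (2 * v' τ * (v t - v τ)) * (t - τ)^(-β)) volume 0 t :=
    mul_kern_integrable ht hβ1 ((continuousOn_const.mul hv').mul (continuousOn_const.sub hvc))
  have key := sq_diff_integral_nonpos ht hβ0 hβ1 hv' hd
  have hDkey : (∫ τ in (0:ℝ)..t, (-2 * v' τ * (v t - v τ)) * (t - τ)^(-β))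
      = - ∫ τ in (0:ℝ)..t, (2 * v' τ * (v t - v τ)) * (t - τ)^(-β) := by
    rw [← intervalIntegral.integral_neg]
    congr 1; funext τ; ring
  have hDpos : 0 ≤ ∫ τ in (0:ℝ)..t, (2 * v' τ * (v t - v τ)) * (t - τ)^(-β) := by
    rw [hDkey] at key; linarith
  have hsum : (∫ τ in (0:ℝ)..t, (2 * v τ * v' τ) * (t - τ)^(-β))
      + (∫ τ in (0:ℝ)..t, (2 * v' τ * (v t - v τ)) * (t - τ)^(-β))
      = 2 * v t * ∫ τ in (0:ℝ)..t, v' τ * (t - τ)^(-β) := by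
    rw [← intervalIntegral.integral_add h2 hD, ← intervalIntegral.integral_const_mul]
    congr 1; funext τ; ring
  have goal1 : (∫ τ in (0:ℝ)..t, (2 * v τ * v' τ) * (t - τ)^(-β))
      ≤ 2 * v t * ∫ τ in (0:ℝ)..t, v' τ * (t - τ)^(-β) := by linarith
  simp only [caputoT]
  have hpos : 0 ≤ 1 / Real.Gamma (1 - β) := by positivity
  calc 1 / Real.Gamma (1 - β) * ∫ τ in (0:ℝ)..t, 2 * v τ * v' τ * (t - τ)^(-β)
      ≤ 1 / Real.Gamma (1 - β) * (2 * v t * ∫ τ in (0:ℝ)..t, v' τ * (t - τ)^(-β)) := by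
        apply mul_le_mul_of_nonneg_left _ hpos
        convert goal1 using 2
    _ = 2 * v t * (1 / Real.Gamma (1 - β) * ∫ τ in (0:ℝ)..t, v' τ * (t - τ)^(-β)) := by ring

lemma sq_integral_le {c : ℝ} (hc : 0 < c) {f : ℝ → ℝ} (hf : ContinuousOn f (Icc 0 c)) :
    ∀ x ∈ Icc (0:ℝ) c, (∫ τ in (0:ℝ)..x, f τ) ^ 2 ≤ x * ∫ τ in (0:ℝ)..x, f τ ^ 2 := by
  set F : ℝ → ℝ := fun s => ∫ τ in (0:ℝ)..s, f τ with hF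
  set G : ℝ → ℝ := fun s => ∫ τ in (0:ℝ)..s, f τ ^ 2 with hG
  set H : ℝ → ℝ := fun s => s * G s - (F s) ^ 2 with hH
  have hfint : ∀ x ∈ Icc (0:ℝ) c, IntervalIntegrable f volume 0 x := by
    intro x hx
    apply ContinuousOn.intervalIntegrable
    rw [uIcc_of_le hx.1]
    exact hf.mono (Icc_subset_Icc le_rfl hx.2)
  have hf2int : ∀ x ∈ Icc (0:ℝ) c, IntervalIntegrable (fun τ => f τ ^ 2) volume 0 x := by
    intro x hx
    apply ContinuousOn.intervalIntegrable
    rw [uIcc_of_le hx.1]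
    exact (hf.pow 2).mono (Icc_subset_Icc le_rfl hx.2)
  have hFc : ContinuousOn F (Icc 0 c) := by
    have := intervalIntegral.continuousOn_primitive_interval'
      (μ := volume) (hfint c (right_mem_Icc.mpr hc.le)) left_mem_uIcc
    rwa [uIcc_of_le hc.le] at this
  have hGc : ContinuousOn G (Icc 0 c) := by
    have := intervalIntegral.continuousOn_primitive_interval'
      (μ := volume) (hf2int c (right_mem_Icc.mpr hc.le)) left_mem_uIcc
    rwa [uIcc_of_le hc.le] at this
  have hHc : ContinuousOn H (Icc 0 c) :=
    (continuousOn_id.mul hGc).sub (hFc.pow 2)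
  have hderiv : ∀ s ∈ Ioo (0:ℝ) c,
      HasDerivAt H (G s + s * (f s ^ 2) - 2 * F s * f s) s := by
    intro s hs
    have hmem : Icc (0:ℝ) c ∈ 𝓝 s := Icc_mem_nhds hs.1 hs.2
    have hfa : ContinuousAt f s := (hf s (Ioo_subset_Icc_self hs)).continuousAt hmem
    have hmeas : StronglyMeasurableAtFilter f (𝓝 s) := by
      refine ⟨Ioo 0 c, Ioo_mem_nhds hs.1 hs.2, ?_⟩
      exact ((hf.mono Ioo_subset_Icc_self).aestronglyMeasurable measurableSet_Ioo)
    have hmeas2 : StronglyMeasurableAtFilter (fun τ => f τ ^ 2) (𝓝 s) := by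
      refine ⟨Ioo 0 c, Ioo_mem_nhds hs.1 hs.2, ?_⟩
      exact (((hf.pow 2).mono Ioo_subset_Icc_self).aestronglyMeasurable measurableSet_Ioo)
    have hFd : HasDerivAt F (f s) s :=
      intervalIntegral.integral_hasDerivAt_right
        (hfint s (Ioo_subset_Icc_self hs)) hmeas hfa
    have hGd : HasDerivAt G (f s ^ 2) s :=
      intervalIntegral.integral_hasDerivAt_right
        (hf2int s (Ioo_subset_Icc_self hs)) hmeas2 (hfa.pow 2)
    have h1 : HasDerivAt (fun s => s * G s) (1 * G s + s * (f s ^ 2)) s :=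
      (hasDerivAt_id s).mul hGd
    have h2 : HasDerivAt (fun s => (F s) ^ 2) (2 * F s * f s) s := by
      have := hFd.fun_pow 2
      simpa [mul_comm, mul_assoc] using this
    have := h1.sub h2
    refine this.congr_deriv ?_
    ring
  have hd0 : ∀ s ∈ Ioo (0:ℝ) c, 0 ≤ G s + s * (f s ^ 2) - 2 * F s * f s := by
    intro s hs
    have key : 2 * F s * f s ≤ G s + s * f s ^ 2 := by
      have e1 : 2 * F s * f s = ∫ τ in (0:ℝ)..s, 2 * f s * f τ := by
        rw [intervalIntegral.integral_const_mul]; ring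
      have e2 : G s + s * f s ^ 2 = ∫ τ in (0:ℝ)..s, (f τ ^ 2 + f s ^ 2) := by
        rw [intervalIntegral.integral_add (hf2int s (Ioo_subset_Icc_self hs))
          _root_.intervalIntegrable_const, intervalIntegral.integral_const]
        simp [hG]
      rw [e1, e2]
      apply intervalIntegral.integral_mono_on hs.1.le
      · exact (_root_.intervalIntegrable_const (c := 2 * f s)).mul_continuousOn
          (by rw [uIcc_of_le hs.1.le]
              exact hf.mono (Icc_subset_Icc le_rfl hs.2.le))
      · exact (hf2int s (Ioo_subset_Icc_self hs)).add _root_.intervalIntegrable_const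
      · intro τ _
        nlinarith [sq_nonneg (f τ - f s)]
    linarith
  have hmono : MonotoneOn H (Icc 0 c) := by
    apply monotoneOn_of_deriv_nonneg (convex_Icc 0 c) hHc
    · intro s hs
      rw [interior_Icc] at hs
      exact (hderiv s hs).differentiableAt.differentiableWithinAt
    · intro s hs
      rw [interior_Icc] at hs
      rw [(hderiv s hs).deriv]
      exact hd0 s hs
  intro x hx
  have h0 : H 0 = 0 := by simp [hH, hF, hG]
  have := hmono (left_mem_Icc.mpr hc.le) hx hx.1
  rw [h0] at this
  simp only [hH] at this
  linarith

lemma gamma_min : ∃ m : ℝ, 0 < m ∧ ∀ s ∈ Icc (1:ℝ) 2, m ≤ Real.Gamma s := by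
  have hcont : ContinuousOn Real.Gamma (Icc 1 2) := by
    intro s hs
    have hs0 : (0:ℝ) < s := lt_of_lt_of_le one_pos hs.1
    have hne : ∀ m : ℕ, s ≠ -m := by
      intro m h
      have : (0:ℝ) ≤ (m:ℝ) := Nat.cast_nonneg m
      rw [h] at hs0; linarith
    exact (Real.differentiableAt_Gamma hne).continuousAt.continuousWithinAt
  obtain ⟨z, hz, hmin⟩ := isCompact_Icc.exists_isMinOn (nonempty_Icc.mpr one_le_two) hcont
  exact ⟨Real.Gamma z, Real.Gamma_pos_of_pos (lt_of_lt_of_le one_pos hz.1),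
    fun s hs => hmin hs⟩

lemma caputo_unif_bound {t β M m : ℝ} (ht : 0 < t) (hβ0 : 0 < β) (hβ1 : β < 1)
    (hm : 0 < m) (hmg : ∀ s ∈ Icc (1:ℝ) 2, m ≤ Real.Gamma s)
    {φ : ℝ → ℝ} (hφ : ContinuousOn φ (Icc 0 t)) (hM : ∀ τ ∈ Icc (0:ℝ) t, |φ τ| ≤ M) :
    |caputoT β φ t| ≤ M * max 1 t / m := by
  have hM0 : 0 ≤ M := le_trans (abs_nonneg _) (hM 0 (left_mem_Icc.mpr ht.le))
  have hΓ : 0 < Real.Gamma (1 - β) := Real.Gamma_pos_of_pos (by linarith)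
  have hIint : IntervalIntegrable (fun τ => φ τ * (t - τ) ^ (-β)) volume 0 t :=
    mul_kern_integrable ht hβ1 hφ
  have habs : |∫ τ in (0:ℝ)..t, φ τ * (t - τ) ^ (-β)|
      ≤ ∫ τ in (0:ℝ)..t, M * (t - τ) ^ (-β) := by
    refine (intervalIntegral.abs_integral_le_integral_abs ht.le).trans ?_
    apply intervalIntegral.integral_mono_on ht.le hIint.abs
      ((kernIntegrable hβ1).const_mul M)
    intro τ hτ
    have hg : 0 ≤ (t - τ) ^ (-β) := Real.rpow_nonneg (by linarith [hτ.2]) _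
    rw [abs_mul, abs_of_nonneg hg]
    exact mul_le_mul_of_nonneg_right (hM τ hτ) hg
  rw [intervalIntegral.integral_const_mul, kernIntegral ht.le hβ1] at habs
  have hG2 : Real.Gamma (2 - β) = (1 - β) * Real.Gamma (1 - β) := by
    have := Real.Gamma_add_one (s := 1 - β) (by linarith)
    convert this using 2
    ring
  have hG2m : m ≤ Real.Gamma (2 - β) :=
    hmg _ ⟨by linarith, by linarith⟩
  have htp : t ^ (1 - β) ≤ max 1 t := by
    rcases le_total t 1 with h | h
    · exact le_trans (Real.rpow_le_one ht.le h (by linarith)) (le_max_left _ _)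
    · refine le_trans ?_ (le_max_right _ _)
      calc t ^ (1 - β) ≤ t ^ (1:ℝ) :=
        Real.rpow_le_rpow_of_exponent_le h (by linarith)
      _ = t := Real.rpow_one t
  have h1β : (0:ℝ) < 1 - β := by linarith
  have hcap : |caputoT β φ t| ≤ M * t ^ (1 - β) / Real.Gamma (2 - β) := by
    rw [caputoT, abs_mul]
    rw [abs_of_nonneg (by positivity : (0:ℝ) ≤ 1 / Real.Gamma (1 - β))]
    calc 1 / Real.Gamma (1 - β) * |∫ τ in (0:ℝ)..t, φ τ * (t - τ) ^ (-β)|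
        ≤ 1 / Real.Gamma (1 - β) * (M * (t ^ (1 - β) / (1 - β))) := by
          apply mul_le_mul_of_nonneg_left _ (by positivity)
          exact habs
      _ = M * t ^ (1 - β) / ((1 - β) * Real.Gamma (1 - β)) := by
          rw [div_mul_eq_mul_div, one_mul, ← mul_div_assoc, div_div]
      _ = M * t ^ (1 - β) / Real.Gamma (2 - β) := by rw [hG2]
  refine hcap.trans ?_
  apply div_le_div₀ (by positivity) _ hm hG2m
  exact mul_le_mul_of_nonneg_left htp hM0

lemma caputo_param_integrable
    {l T t : ℝ} (hl : 0 < l) (hT : 0 < T) (ht : t ∈ Ioc (0:ℝ) T)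
    {α : ℝ → ℝ} (hαc : ContinuousOn α (Icc 0 l))
    (hα : ∀ x ∈ Ioo (0:ℝ) l, 0 < α x ∧ α x < 1)
    {h : ℝ → ℝ → ℝ}
    (hh : ContinuousOn (fun p : ℝ × ℝ => h p.1 p.2) (Icc 0 l ×ˢ Icc 0 T)) :
    IntervalIntegrable (fun x => caputoT (α x) (fun τ => h x τ) t) volume 0 l := by
  obtain ⟨ht0, htT⟩ := ht
  have hIccsub : Icc (0:ℝ) t ⊆ Icc 0 T := Icc_subset_Icc le_rfl htT
  have hsect : ∀ x ∈ Icc (0:ℝ) l, ContinuousOn (fun τ => h x τ) (Icc 0 t) := by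
    intro x hx
    exact hh.comp ((continuous_const.prodMk continuous_id).continuousOn)
      (fun τ hτ => ⟨hx, hIccsub hτ⟩)
  have hsectx : ∀ τ ∈ Icc (0:ℝ) t, ContinuousOn (fun x => h x τ) (Icc 0 l) := by
    intro τ hτ
    exact hh.comp ((continuous_id.prodMk continuous_const).continuousOn)
      (fun x hx => ⟨hx, hIccsub hτ⟩)
  obtain ⟨M, hM⟩ := (isCompact_Icc.prod isCompact_Icc).exists_bound_of_continuousOn hh
  have hMb : ∀ x ∈ Icc (0:ℝ) l, ∀ τ ∈ Icc (0:ℝ) t, |h x τ| ≤ M := by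
    intro x hx τ hτ
    simpa using hM (x, τ) ⟨hx, hIccsub hτ⟩
  have hM0 : 0 ≤ M := le_trans (abs_nonneg _)
    (hMb 0 (left_mem_Icc.mpr hl.le) 0 (left_mem_Icc.mpr ht0.le))
  obtain ⟨m, hm, hmg⟩ := gamma_min
  set F : ℝ → ℝ := fun x => caputoT (α x) (fun τ => h x τ) t with hF
  have hbd : ∀ x ∈ Ioo (0:ℝ) l, |F x| ≤ M * max 1 t / m := by
    intro x hx
    exact caputo_unif_bound ht0 (hα x hx).1 (hα x hx).2 hm hmg
      (hsect x (Ioo_subset_Icc_self hx)) (hMb x (Ioo_subset_Icc_self hx))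
  -- continuity on the open interval
  have hcont : ∀ x₀ ∈ Ioo (0:ℝ) l, ContinuousAt F x₀ := by
    intro x₀ hx₀
    have hαcont : ContinuousAt α x₀ :=
      hαc.continuousAt (Icc_mem_nhds hx₀.1 hx₀.2)
    obtain ⟨hα0, hα1⟩ := hα x₀ hx₀
    set β₀ : ℝ := (1 + α x₀) / 2 with hβ₀
    have hβ₀1 : β₀ < 1 := by rw [hβ₀]; linarith
    have hβ₀gt : α x₀ < β₀ := by rw [hβ₀]; linarith
    have hβ₀0 : 0 < β₀ := by rw [hβ₀]; linarith
    have hev1 : ∀ᶠ x in 𝓝 x₀, x ∈ Ioo (0:ℝ) l := isOpen_Ioo.eventually_mem hx₀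
    have hev2 : ∀ᶠ x in 𝓝 x₀, α x < β₀ := hαcont.eventually_lt_const hβ₀gt
    have hIsub : Set.uIoc (0:ℝ) t ⊆ Icc 0 t := by
      rw [uIoc_of_le ht0.le]; exact Ioc_subset_Icc_self
    have hintcont : ContinuousAt (fun x => ∫ τ in (0:ℝ)..t, h x τ * (t - τ) ^ (-α x)) x₀ := by
      apply intervalIntegral.continuousAt_of_dominated_interval
        (bound := fun τ => M * ((t - τ) ^ (-β₀) + 1))
      · filter_upwards [hev1] with x hx
        exact (((hsect x (Ioo_subset_Icc_self hx)).mono hIsub).aestronglyMeasurable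
          measurableSet_uIoc).mul (kernMeasurable t (α x)).aestronglyMeasurable.restrict
      · filter_upwards [hev1, hev2] with x hx1 hx2
        refine ae_of_all _ fun τ hτ => ?_
        rw [uIoc_of_le ht0.le] at hτ
        have hz0 : 0 ≤ t - τ := by linarith [hτ.2]
        have hzt : t - τ ≤ t := by linarith [hτ.1]
        have hk0 : 0 ≤ (t - τ) ^ (-α x) := Real.rpow_nonneg hz0 _
        have hker : (t - τ) ^ (-α x) ≤ (t - τ) ^ (-β₀) + 1 := by
          rcases eq_or_lt_of_le hz0 with hz | hz
        -- z = 0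
          · rw [← hz, Real.zero_rpow (by linarith [(hα x hx1).1] : -α x ≠ 0)]
            have : (0:ℝ) ≤ ((0:ℝ)) ^ (-β₀) := Real.rpow_nonneg le_rfl _
            linarith
          · rcases le_total (t - τ) 1 with h1 | h1
            · have := Real.rpow_le_rpow_of_exponent_ge hz h1
                (by linarith : -β₀ ≤ -α x)
              have h2 : (0:ℝ) ≤ (t - τ) ^ (-β₀) := Real.rpow_nonneg hz0 _
              linarith
            · have h2 : (t - τ) ^ (-α x) ≤ 1 :=
                Real.rpow_le_one_of_one_le_of_nonpos h1 (by linarith [(hα x hx1).1])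
              have h3 : (0:ℝ) ≤ (t - τ) ^ (-β₀) := Real.rpow_nonneg hz0 _
              linarith
        have hhb : |h x τ| ≤ M := hMb x (Ioo_subset_Icc_self hx1) τ (Ioc_subset_Icc_self hτ)
        rw [Real.norm_eq_abs, abs_mul, abs_of_nonneg hk0]
        have hk1 : 0 ≤ (t - τ) ^ (-β₀) + 1 := by
          have : (0:ℝ) ≤ (t - τ) ^ (-β₀) := Real.rpow_nonneg hz0 _
          linarith
        exact mul_le_mul hhb hker hk0 hM0
      · exact ((kernIntegrable hβ₀1).add _root_.intervalIntegrable_const).const_mul M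
      · have hae : ∀ᵐ (τ : ℝ), τ ≠ t := by
          rw [ae_iff]
          simp only [not_not]
          simpa using measure_singleton t
        filter_upwards [hae] with τ hτne hτ
        rw [uIoc_of_le ht0.le] at hτ
        have hz : 0 < t - τ := lt_of_le_of_ne (by linarith [hτ.2]) (by
          intro hc
          exact hτne (by linarith))
        have hc1 : ContinuousAt (fun x => h x τ) x₀ :=
          (hsectx τ (Ioc_subset_Icc_self hτ) x₀ (Ioo_subset_Icc_self hx₀)).continuousAt
            (Icc_mem_nhds hx₀.1 hx₀.2)
        have hc2 : ContinuousAt (fun x => (t - τ) ^ (-α x)) x₀ :=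
          (Real.continuousAt_const_rpow (ne_of_gt hz)).comp hαcont.neg
        exact hc1.mul hc2
    have hΓcont : ContinuousAt (fun x => 1 / Real.Gamma (1 - α x)) x₀ := by
      have hne : ∀ n : ℕ, 1 - α x₀ ≠ -n := by
        intro n hc
        have : (0:ℝ) ≤ (n:ℝ) := Nat.cast_nonneg n
        have h1 : (0:ℝ) < 1 - α x₀ := by linarith
        rw [hc] at h1; linarith
      have hf1 : ContinuousAt (fun x => 1 - α x) x₀ := continuousAt_const.sub hαcont
      have h2 : ContinuousAt (fun x => Real.Gamma (1 - α x)) x₀ :=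
        ContinuousAt.comp (g := Real.Gamma) (x := x₀)
          (Real.differentiableAt_Gamma hne).continuousAt hf1
      exact continuousAt_const.div h2
        (ne_of_gt (Real.Gamma_pos_of_pos (by linarith)))
    exact hΓcont.mul hintcont
  -- now integrability
  rw [intervalIntegrable_iff_integrableOn_Ioc_of_le hl.le]
  have hIoo : IntegrableOn F (Ioo 0 l) volume := by
    refine ⟨ContinuousOn.aestronglyMeasurable
      (fun x hx => (hcont x hx).continuousWithinAt) measurableSet_Ioo, ?_⟩
    apply HasFiniteIntegral.restrict_of_bounded (C := M * max 1 t / m)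
      measure_Ioo_lt_top
    filter_upwards [ae_restrict_mem measurableSet_Ioo] with x hx
    rw [Real.norm_eq_abs]
    exact hbd x hx
  exact hIoo.congr_set_ae Ioo_ae_eq_Ioc.symm

lemma sect_t {l T t : ℝ} {g : ℝ → ℝ → ℝ}
    (hg : ContinuousOn (fun p : ℝ × ℝ => g p.1 p.2) (Icc 0 l ×ˢ Icc 0 T))
    (htm : t ∈ Icc (0:ℝ) T) : ContinuousOn (fun x => g x t) (Icc 0 l) :=
  hg.comp ((continuous_id.prodMk continuous_const).continuousOn) (fun x hx => ⟨hx, htm⟩)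

/-- Pointwise-in-time energy inequality (8)–(9) for the Dirichlet problem for
the variable order diffusion equation `∂_{0t}^{α(x)} u = (k u_x)_x − q u + f`:
`∫_0^l ∂_{0t}^{α(x)} u² dx + c₁‖u_x‖₀² ≤ (l²/(2c₁))‖f‖₀²`. -/
theorem dirichlet_variable_order_pointwise_estimate
    (l T c₁ : ℝ) (hl : 0 < l) (hT : 0 < T) (hc₁ : 0 < c₁)
    (α : ℝ → ℝ) (hαc : ContinuousOn α (Icc 0 l))
    (hα : ∀ x ∈ Ioo (0:ℝ) l, 0 < α x ∧ α x < 1)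
    (k kx q f : ℝ → ℝ → ℝ)
    (hk : ContinuousOn (fun p : ℝ × ℝ => k p.1 p.2) (Icc 0 l ×ˢ Icc 0 T))
    (hkx : ContinuousOn (fun p : ℝ × ℝ => kx p.1 p.2) (Icc 0 l ×ˢ Icc 0 T))
    (hkd : ∀ t ∈ Icc (0:ℝ) T, ∀ x ∈ Icc (0:ℝ) l,
      HasDerivWithinAt (fun z => k z t) (kx x t) (Icc 0 l) x)
    (hkc₁ : ∀ x ∈ Icc (0:ℝ) l, ∀ t ∈ Icc (0:ℝ) T, c₁ ≤ k x t)
    (hq : ContinuousOn (fun p : ℝ × ℝ => q p.1 p.2) (Icc 0 l ×ˢ Icc 0 T))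
    (hq0 : ∀ x ∈ Icc (0:ℝ) l, ∀ t ∈ Icc (0:ℝ) T, 0 ≤ q x t)
    (hf : ContinuousOn (fun p : ℝ × ℝ => f p.1 p.2) (Icc 0 l ×ˢ Icc 0 T))
    (u ux uxx ut : ℝ → ℝ → ℝ)
    -- u ∈ C^{2,1}(Q̄_T):
    (hu : ContinuousOn (fun p : ℝ × ℝ => u p.1 p.2) (Icc 0 l ×ˢ Icc 0 T))
    (hux : ContinuousOn (fun p : ℝ × ℝ => ux p.1 p.2) (Icc 0 l ×ˢ Icc 0 T))
    (huxx : ContinuousOn (fun p : ℝ × ℝ => uxx p.1 p.2) (Icc 0 l ×ˢ Icc 0 T))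
    (hut : ContinuousOn (fun p : ℝ × ℝ => ut p.1 p.2) (Icc 0 l ×ˢ Icc 0 T))
    (huxd : ∀ t ∈ Icc (0:ℝ) T, ∀ x ∈ Icc (0:ℝ) l,
      HasDerivWithinAt (fun z => u z t) (ux x t) (Icc 0 l) x)
    (huxxd : ∀ t ∈ Icc (0:ℝ) T, ∀ x ∈ Icc (0:ℝ) l,
      HasDerivWithinAt (fun z => ux z t) (uxx x t) (Icc 0 l) x)
    (hutd : ∀ x ∈ Icc (0:ℝ) l, ∀ t ∈ Icc (0:ℝ) T,
      HasDerivWithinAt (fun s => u x s) (ut x t) (Icc 0 T) t)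
    -- the equation:
    (heq : ∀ x ∈ Ioo (0:ℝ) l, ∀ t ∈ Ioc (0:ℝ) T,
      caputoT (α x) (fun τ => ut x τ) t =
        (kx x t * ux x t + k x t * uxx x t) - q x t * u x t + f x t)
    -- boundary and initial conditions:
    (hbc : ∀ t ∈ Icc (0:ℝ) T, u 0 t = 0 ∧ u l t = 0) :
    ∀ t ∈ Ioc (0:ℝ) T,
      (∫ x in (0:ℝ)..l, caputoT (α x) (fun s => 2 * u x s * ut x s) t) +
        c₁ * (∫ x in (0:ℝ)..l, (ux x t) ^ 2) ≤
      l ^ 2 / (2 * c₁) * (∫ x in (0:ℝ)..l, (f x t) ^ 2) := by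
  intro t ht
  obtain ⟨ht0, htT⟩ := ht
  have htm : t ∈ Icc (0:ℝ) T := ⟨ht0.le, htT⟩
  have hIccsub : Icc (0:ℝ) t ⊆ Icc 0 T := Icc_subset_Icc le_rfl htT
  -- section continuity at time t
  have hUc : ContinuousOn (fun x => u x t) (Icc 0 l) := sect_t hu htm
  have hUXc : ContinuousOn (fun x => ux x t) (Icc 0 l) := sect_t hux htm
  have hUXXc : ContinuousOn (fun x => uxx x t) (Icc 0 l) := sect_t huxx htm
  have hKc : ContinuousOn (fun x => k x t) (Icc 0 l) := sect_t hk htm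
  have hKXc : ContinuousOn (fun x => kx x t) (Icc 0 l) := sect_t hkx htm
  have hQc : ContinuousOn (fun x => q x t) (Icc 0 l) := sect_t hq htm
  have hFc : ContinuousOn (fun x => f x t) (Icc 0 l) := sect_t hf htm
  set B : ℝ → ℝ := fun x =>
    (kx x t * ux x t + k x t * uxx x t) - q x t * u x t + f x t with hB
  set A : ℝ → ℝ := fun x => caputoT (α x) (fun s => 2 * u x s * ut x s) t with hA
  -- Step 1: A x ≤ 2 u x t * B x on Icc
  have hAB : ∀ x ∈ Icc (0:ℝ) l, A x ≤ 2 * u x t * B x := by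
    intro x hx
    rcases eq_or_lt_of_le hx.1 with hx0 | hx0
    · -- x = 0
      have hu0 : ∀ s ∈ Icc (0:ℝ) t, u x s = 0 := fun s hs => by
        rw [← hx0]; exact (hbc s (hIccsub hs)).1
      have hA0 : A x = 0 := by
        rw [hA]
        simp only [caputoT]
        rw [intervalIntegral.integral_congr (g := fun _ => (0:ℝ))
          (by
            intro s hs
            rw [uIcc_of_le ht0.le] at hs
            simp [hu0 s hs])]
        simp
      rw [hA0, hu0 t (right_mem_Icc.mpr ht0.le)]
      simp
    rcases eq_or_lt_of_le hx.2 with hxl | hxl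
    · -- x = l
      have hu0 : ∀ s ∈ Icc (0:ℝ) t, u x s = 0 := fun s hs => by
        rw [hxl]; exact (hbc s (hIccsub hs)).2
      have hA0 : A x = 0 := by
        rw [hA]
        simp only [caputoT]
        rw [intervalIntegral.integral_congr (g := fun _ => (0:ℝ))
          (by
            intro s hs
            rw [uIcc_of_le ht0.le] at hs
            simp [hu0 s hs])]
        simp
      rw [hA0, hu0 t (right_mem_Icc.mpr ht0.le)]
      simp
    · -- interior
      have hxIoo : x ∈ Ioo (0:ℝ) l := ⟨hx0, hxl⟩
      obtain ⟨ha0, ha1⟩ := hα x hxIoo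
      have hv'c : ContinuousOn (fun s => ut x s) (Icc 0 t) :=
        (hut.comp ((continuous_const.prodMk continuous_id).continuousOn)
          (fun τ hτ => ⟨hx, hIccsub hτ⟩))
      have hd : ∀ τ ∈ Icc (0:ℝ) t, HasDerivWithinAt (fun s => u x s) (ut x τ) (Icc 0 t) τ :=
        fun τ hτ => (hutd x hx τ (hIccsub hτ)).mono hIccsub
      have := caputo_sq_le ht0 ha0 ha1 hv'c hd
      rw [heq x hxIoo t ⟨ht0, htT⟩] at this
      exact this
  -- Step 2: integrability of A and of the right-hand side
  have hAint : IntervalIntegrable A volume 0 l :=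
    caputo_param_integrable hl hT ⟨ht0, htT⟩ hαc hα
      (h := fun x s => 2 * u x s * ut x s) ((continuousOn_const.mul hu).mul hut)
  have hBc : ContinuousOn (fun x => 2 * u x t * B x) (Icc 0 l) := by
    apply (continuousOn_const.mul hUc).mul
    exact ((hKXc.mul hUXc).add (hKc.mul hUXXc)).sub (hQc.mul hUc) |>.add hFc
  have hBint : IntervalIntegrable (fun x => 2 * u x t * B x) volume 0 l := by
    apply ContinuousOn.intervalIntegrable; rwa [uIcc_of_le hl.le]
  have hstep1 : (∫ x in (0:ℝ)..l, A x) ≤ ∫ x in (0:ℝ)..l, 2 * u x t * B x :=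
    intervalIntegral.integral_mono_on hl.le hAint hBint hAB
  -- Step 3: 2uB ≤ P with P = 2u(kx ux + k uxx) + 2uf
  set P : ℝ → ℝ := fun x =>
    2 * u x t * (kx x t * ux x t + k x t * uxx x t) + 2 * u x t * f x t with hP
  have hPc : ContinuousOn P (Icc 0 l) := by
    apply ContinuousOn.add
    · exact (continuousOn_const.mul hUc).mul ((hKXc.mul hUXc).add (hKc.mul hUXXc))
    · exact (continuousOn_const.mul hUc).mul hFc
  have hPint : IntervalIntegrable P volume 0 l := by
    apply ContinuousOn.intervalIntegrable; rwa [uIcc_of_le hl.le]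
  have hstep2 : (∫ x in (0:ℝ)..l, 2 * u x t * B x) ≤ ∫ x in (0:ℝ)..l, P x := by
    apply intervalIntegral.integral_mono_on hl.le hBint hPint
    intro x hx
    have h1 : 0 ≤ q x t := hq0 x hx t htm
    have h2 : 0 ≤ (u x t) ^ 2 := sq_nonneg _
    simp only [hB, hP]
    nlinarith
  -- Step 4: integration by parts
  set G1 : ℝ → ℝ := fun x => 2 * u x t * (kx x t * ux x t + k x t * uxx x t) with hG1
  set G2 : ℝ → ℝ := fun x => 2 * k x t * (ux x t) ^ 2 with hG2
  have hG1c : ContinuousOn G1 (Icc 0 l) :=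
    (continuousOn_const.mul hUc).mul ((hKXc.mul hUXc).add (hKc.mul hUXXc))
  have hG2c : ContinuousOn G2 (Icc 0 l) :=
    (continuousOn_const.mul hKc).mul (hUXc.pow 2)
  have hG1int : IntervalIntegrable G1 volume 0 l := by
    apply ContinuousOn.intervalIntegrable; rwa [uIcc_of_le hl.le]
  have hG2int : IntervalIntegrable G2 volume 0 l := by
    apply ContinuousOn.intervalIntegrable; rwa [uIcc_of_le hl.le]
  have hparts : (∫ x in (0:ℝ)..l, G1 x) = - ∫ x in (0:ℝ)..l, G2 x := by
    have hGd : ∀ x ∈ Icc (0:ℝ) l,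
        HasDerivWithinAt (fun z => 2 * u z t * (k z t * ux z t))
          (G1 x + G2 x) (Icc 0 l) x := by
      intro x hx
      have h1 := huxd t htm x hx
      have h2 := hkd t htm x hx
      have h3 := huxxd t htm x hx
      have hprod : HasDerivWithinAt (fun z => (2 * u z t) * (k z t * ux z t))
          ((2 * ux x t) * (k x t * ux x t)
            + (2 * u x t) * (kx x t * ux x t + k x t * uxx x t)) (Icc 0 l) x :=
        (h1.const_mul 2).mul (h2.mul h3)
      convert hprod using 1
      simp only [hG1, hG2]
      ring
    have hcontG : ContinuousOn (fun z => 2 * u z t * (k z t * ux z t)) (Icc 0 l) :=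
      (continuousOn_const.mul hUc).mul (hKc.mul hUXc)
    have hftc := intervalIntegral.integral_eq_sub_of_hasDeriv_right_of_le hl.le hcontG
      (f' := fun x => G1 x + G2 x)
      (fun x hx => ((hGd x (Ioo_subset_Icc_self hx)).hasDerivAt
        (Icc_mem_nhds hx.1 hx.2)).hasDerivWithinAt)
      (hG1int.add hG2int)
    simp only [(hbc t htm).1, (hbc t htm).2, mul_zero, zero_mul, sub_zero,
      sub_self] at hftc
    rw [intervalIntegral.integral_add hG1int hG2int] at hftc
    linarith
  -- Step 5: coercivity
  set K : ℝ := ∫ x in (0:ℝ)..l, (ux x t) ^ 2 with hK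
  have hKnn : 0 ≤ K := by
    apply intervalIntegral.integral_nonneg hl.le
    intro x _; positivity
  have hcoer : 2 * c₁ * K ≤ ∫ x in (0:ℝ)..l, G2 x := by
    have : (∫ x in (0:ℝ)..l, 2 * c₁ * (ux x t) ^ 2) ≤ ∫ x in (0:ℝ)..l, G2 x := by
      apply intervalIntegral.integral_mono_on hl.le _ hG2int
      · intro x hx
        have := hkc₁ x hx t htm
        simp only [hG2]
        nlinarith [sq_nonneg (ux x t)]
      · exact (ContinuousOn.intervalIntegrable (by
          rw [uIcc_of_le hl.le]; exact continuousOn_const.mul (hUXc.pow 2)))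
    rwa [intervalIntegral.integral_const_mul] at this
  -- Step 6: Friedrichs inequality
  set IU : ℝ := ∫ x in (0:ℝ)..l, (u x t) ^ 2 with hIU
  have hfried : IU ≤ l ^ 2 / 2 * K := by
    have hrep : ∀ x ∈ Icc (0:ℝ) l, u x t = ∫ z in (0:ℝ)..x, ux z t := by
      intro x hx
      rcases eq_or_lt_of_le hx.1 with h0 | h0
      · rw [← h0]
        simp [(hbc t htm).1]
      have hftc := intervalIntegral.integral_eq_sub_of_hasDeriv_right_of_le hx.1
        (f := fun z => u z t) (f' := fun z => ux z t)
        (hUc.mono (Icc_subset_Icc le_rfl hx.2))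
        (fun z hz => ((huxd t htm z ⟨hz.1.le, hz.2.le.trans hx.2⟩).hasDerivAt
          (Icc_mem_nhds hz.1 (lt_of_lt_of_le hz.2 hx.2))).hasDerivWithinAt)
        (ContinuousOn.intervalIntegrable (by
          rw [uIcc_of_le hx.1]
          exact hUXc.mono (Icc_subset_Icc le_rfl hx.2)))
      rw [hftc]
      simp [(hbc t htm).1]
    have hsq : ∀ x ∈ Icc (0:ℝ) l, (u x t) ^ 2 ≤ x * K := by
      intro x hx
      rw [hrep x hx]
      refine (sq_integral_le hl hUXc x hx).trans ?_
      apply mul_le_mul_of_nonneg_left _ hx.1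
      apply intervalIntegral.integral_mono_interval le_rfl hx.1 hx.2
      · filter_upwards with z
        positivity
      · exact (ContinuousOn.intervalIntegrable (by
          rw [uIcc_of_le hl.le]; exact hUXc.pow 2))
    have hm : IU ≤ ∫ x in (0:ℝ)..l, x * K := by
      apply intervalIntegral.integral_mono_on hl.le _ _ hsq
      · exact (ContinuousOn.intervalIntegrable (by
          rw [uIcc_of_le hl.le]; exact hUc.pow 2))
      · exact (ContinuousOn.intervalIntegrable (by
          rw [uIcc_of_le hl.le]; exact continuousOn_id.mul continuousOn_const))
    have : (∫ x in (0:ℝ)..l, x * K) = l ^ 2 / 2 * K := by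
      rw [intervalIntegral.integral_mul_const, integral_id]
      ring
    linarith
  -- Step 7: Young's inequality term
  set IF : ℝ := ∫ x in (0:ℝ)..l, (f x t) ^ 2 with hIF
  set ε : ℝ := 2 * c₁ / l ^ 2 with hε
  have hεpos : 0 < ε := by positivity
  have hyoung : (∫ x in (0:ℝ)..l, 2 * u x t * f x t) ≤ ε * IU + (1 / ε) * IF := by
    have hpt : ∀ x ∈ Icc (0:ℝ) l,
        2 * u x t * f x t ≤ ε * (u x t) ^ 2 + (1 / ε) * (f x t) ^ 2 := by
      intro x _
      have h := sq_nonneg (ε * u x t - f x t)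
      have h3 : ε * ((1 / ε) * (f x t) ^ 2) = (f x t) ^ 2 := by
        field_simp
      have h4 : ε * (2 * u x t * f x t) ≤ ε * (ε * (u x t) ^ 2 + (1 / ε) * (f x t) ^ 2) := by
        nlinarith [h, h3]
      exact le_of_mul_le_mul_left h4 hεpos
    have h1 : (∫ x in (0:ℝ)..l, 2 * u x t * f x t)
        ≤ ∫ x in (0:ℝ)..l, (ε * (u x t) ^ 2 + (1 / ε) * (f x t) ^ 2) := by
      apply intervalIntegral.integral_mono_on hl.le _ _ hpt
      · exact (ContinuousOn.intervalIntegrable (by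
          rw [uIcc_of_le hl.le]
          exact (continuousOn_const.mul hUc).mul hFc))
      · exact (ContinuousOn.intervalIntegrable (by
          rw [uIcc_of_le hl.le]
          exact (continuousOn_const.mul (hUc.pow 2)).add
            (continuousOn_const.mul (hFc.pow 2))))
    rw [intervalIntegral.integral_add, intervalIntegral.integral_const_mul,
      intervalIntegral.integral_const_mul] at h1
    · exact h1
    · exact (ContinuousOn.intervalIntegrable (by
        rw [uIcc_of_le hl.le]; exact continuousOn_const.mul (hUc.pow 2)))
    · exact (ContinuousOn.intervalIntegrable (by
        rw [uIcc_of_le hl.le]; exact continuousOn_const.mul (hFc.pow 2)))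
  -- combine everything
  have hPsplit : (∫ x in (0:ℝ)..l, P x)
      = (∫ x in (0:ℝ)..l, G1 x) + ∫ x in (0:ℝ)..l, 2 * u x t * f x t := by
    rw [← intervalIntegral.integral_add hG1int (ContinuousOn.intervalIntegrable (by
      rw [uIcc_of_le hl.le]; exact (continuousOn_const.mul hUc).mul hFc))]
  have hε1 : (1 / ε) = l ^ 2 / (2 * c₁) := by
    rw [hε]; field_simp
  have hε2 : ε * (l ^ 2 / 2) = c₁ := by
    rw [hε]; field_simp
  have hIU2 : ε * IU ≤ c₁ * K := by
    calc ε * IU ≤ ε * (l ^ 2 / 2 * K) := by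
          apply mul_le_mul_of_nonneg_left hfried hεpos.le
      _ = (ε * (l ^ 2 / 2)) * K := by ring
      _ = c₁ * K := by rw [hε2]
  have hG1le : (∫ x in (0:ℝ)..l, G1 x) ≤ - (2 * c₁ * K) := by
    rw [hparts]; linarith
  calc (∫ x in (0:ℝ)..l, A x) + c₁ * K
      ≤ (∫ x in (0:ℝ)..l, P x) + c₁ * K := by linarith
    _ = (∫ x in (0:ℝ)..l, G1 x) + (∫ x in (0:ℝ)..l, 2 * u x t * f x t) + c₁ * K := by
        rw [hPsplit]
    _ ≤ - (2 * c₁ * K) + (ε * IU + (1 / ε) * IF) + c₁ * K := by linarith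
    _ ≤ (1 / ε) * IF := by linarith
    _ = l ^ 2 / (2 * c₁) * IF := by rw [hε1]
end

section
/- Let 0 < α < 1, τ > 0, and let y : ℕ → ℝ be any sequence (a grid function on the grid t_j = jτ). Then for every j ≥ 0: y^{j+1} · Δ_{0t_j}^α y ≥ (1/2) · Δ_{0t_j}^α (y²) + (τ^α Γ(2−α)/2) · (Δ_{0t_j}^α y)², where Δ_{0t_j}^α (y²) denotes the same discrete operator applied to the sequence j ↦ (y^j)². -/
open Finset

private lemma midpoint_rpow {p : ℝ} (hp0 : 0 < p) (hp1 : p < 1) {a b : ℝ}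
    (ha : 0 ≤ a) (hb : 0 ≤ b) :
    a ^ p + b ^ p ≤ 2 * ((a + b) / 2) ^ p := by
  have h := (Real.strictConcaveOn_rpow hp0 hp1).concaveOn
  have h2 := h.2 (Set.mem_Ici.2 ha) (Set.mem_Ici.2 hb)
    (by norm_num : (0:ℝ) ≤ 1/2) (by norm_num : (0:ℝ) ≤ 1/2) (by norm_num)
  simp only [smul_eq_mul] at h2
  have : (1/2 : ℝ) * a + (1/2) * b = (a + b) / 2 := by ring
  rw [this] at h2
  linarith

private lemma tele (y : ℕ → ℝ) : ∀ m n : ℕ, m ≤ n →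
    ∑ k ∈ Ico m n, (y (k+1) - y k) = y n - y m := by
  intro m n h
  induction n with
  | zero => simp_all
  | succ n ih =>
    rcases Nat.lt_or_ge m (n+1) with hm | hm
    · have hm' : m ≤ n := Nat.lt_succ_iff.mp hm
      rw [Finset.sum_Ico_succ_top hm', ih hm']
      ring
    · have : m = n + 1 := le_antisymm h hm
      subst this; simp

private lemma key (c x : ℕ → ℝ) : ∀ j : ℕ, (∀ s, s ≤ j → 0 < c s) →
    (∀ s, s < j → c s ≤ c (s+1)) →
    (∑ s ∈ range (j+1), c s * x s)^2 / (2 * c j) ≤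
      (∑ k ∈ range (j+1), x k * (∑ s ∈ range k, c s * x s)) +
        (1/2) * ∑ s ∈ range (j+1), c s * (x s)^2 := by
  intro j
  induction j with
  | zero =>
    intro hpos _
    have h0 := hpos 0 le_rfl
    simp only [range_one, sum_singleton, range_zero, sum_empty, mul_zero, zero_add]
    rw [div_le_iff₀ (by linarith)]
    ring_nf
    nlinarith [h0]
  | succ j ih =>
    intro hpos hmono
    have hcj : 0 < c j := hpos j (by omega)
    have hcj1 : 0 < c (j+1) := hpos (j+1) le_rfl
    have hle : c j ≤ c (j+1) := hmono j (by omega)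
    set T := ∑ s ∈ range (j+1), c s * x s with hT
    have ihh := ih (fun s hs => hpos s (by omega)) (fun s hs => hmono s (by omega))
    rw [Finset.sum_range_succ (f := fun s => c s * x s),
        Finset.sum_range_succ (f := fun k => x k * (∑ s ∈ range k, c s * x s)),
        Finset.sum_range_succ (f := fun s => c s * (x s)^2)]
    have expand : (T + c (j+1) * x (j+1))^2 / (2 * c (j+1))
        = T^2 / (2 * c (j+1)) + x (j+1) * T + (1/2) * (c (j+1) * x (j+1)^2) := by
      field_simp
      ring
    rw [← hT, expand]
    have hTT : T^2 / (2 * c (j+1)) ≤ T^2 / (2 * c j) :=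
      div_le_div_of_nonneg_left (sq_nonneg T) (by linarith) (by linarith)
    linarith

/-- The discrete analogue of the Caputo fractional derivative of order `α`
on the uniform grid `t_j = jτ`:
`Δ_{0t_j}^α y = (1/Γ(2-α)) Σ_{s=0}^{j} (t_{j-s+1}^{1-α} − t_{j-s}^{1-α}) (y^{s+1} − y^s)/τ`. -/
noncomputable def dCaputo (α τ : ℝ) (y : ℕ → ℝ) (j : ℕ) : ℝ :=
  (1 / Real.Gamma (2 - α)) *
    ∑ s ∈ Finset.range (j + 1),
      (((((j : ℕ) - s + 1 : ℕ) : ℝ) * τ) ^ (1 - α) -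
        ((((j : ℕ) - s : ℕ) : ℝ) * τ) ^ (1 - α)) * (y (s + 1) - y s) / τ

/-- Lemma 2, inequality (22):
`y^{j+1} Δ^α y ≥ (1/2) Δ^α(y²) + (τ^α Γ(2-α)/2) (Δ^α y)²`. -/
theorem discrete_caputo_ineq_upper (α τ : ℝ) (hα0 : 0 < α) (hα1 : α < 1)
    (hτ : 0 < τ) (y : ℕ → ℝ) :
    ∀ j : ℕ,
      y (j + 1) * dCaputo α τ y j ≥
        (1 / 2) * dCaputo α τ (fun n => (y n) ^ 2) j +
          (τ ^ α * Real.Gamma (2 - α) / 2) * (dCaputo α τ y j) ^ 2 := by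
  intro j
  have hp0 : 0 < 1 - α := by linarith
  have hp1 : 1 - α < 1 := by linarith
  have hτα : 0 < τ ^ α := Real.rpow_pos_of_pos hτ α
  have hΓ : 0 < Real.Gamma (2 - α) := Real.Gamma_pos_of_pos (by linarith)
  set c : ℕ → ℝ := fun s =>
    (((((j : ℕ) - s + 1 : ℕ) : ℝ) * τ) ^ (1 - α) -
      ((((j : ℕ) - s : ℕ) : ℝ) * τ) ^ (1 - α)) / τ with hc
  set x : ℕ → ℝ := fun s => y (s+1) - y s with hx
  have hpos : ∀ s, s ≤ j → 0 < c s := by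
    intro s hs
    have h1 : (0:ℝ) ≤ ((j - s : ℕ):ℝ) * τ := by positivity
    have h2 : ((j - s : ℕ):ℝ) * τ < ((j - s + 1 : ℕ):ℝ) * τ := by
      apply mul_lt_mul_of_pos_right _ hτ
      push_cast; linarith
    have h3 := Real.rpow_lt_rpow h1 h2 hp0
    simp only [hc]
    exact div_pos (by linarith) hτ
  have hmono : ∀ s, s < j → c s ≤ c (s+1) := by
    intro s hs
    have e1 : j - s = (j - (s+1)) + 1 := by omega
    set m := j - (s+1) with hm
    simp only [hc, e1]
    have hmid := midpoint_rpow hp0 hp1 (a := (m:ℝ)*τ) (b := ((m:ℝ)+2)*τ)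
      (by positivity) (by positivity)
    have e : (((m:ℝ)*τ) + ((m:ℝ)+2)*τ)/2 = ((m:ℝ)+1)*τ := by ring
    rw [e] at hmid
    have e3 : ((m:ℝ)+1+1)*τ = ((m:ℝ)+2)*τ := by ring
    push_cast
    rw [e3]
    apply div_le_div_of_nonneg_right _ hτ.le
    linarith
  have hcjval : c j = (τ ^ α)⁻¹ := by
    simp only [hc, Nat.sub_self]
    norm_num
    rw [Real.zero_rpow (by linarith : (1:ℝ) - α ≠ 0), Real.rpow_sub hτ, Real.rpow_one]
    field_simp
    ring
  set S := ∑ s ∈ range (j+1), c s * x s with hS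
  set S' := ∑ s ∈ range (j+1), c s * ((y (s+1))^2 - (y s)^2) with hS'
  have hdy : dCaputo α τ y j = (1 / Real.Gamma (2 - α)) * S := by
    unfold dCaputo
    congr 1
    apply Finset.sum_congr rfl
    intro s _
    simp only [hc, hx]
    ring
  have hdy2 : dCaputo α τ (fun n => (y n) ^ 2) j = (1 / Real.Gamma (2 - α)) * S' := by
    unfold dCaputo
    congr 1
    apply Finset.sum_congr rfl
    intro s _
    simp only [hc]
    ring
  -- the summation identity
  have h1 : y (j+1) * S - (1/2) * S' =
      (∑ s ∈ range (j+1), c s * x s * (y (j+1) - y (s+1))) +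
        (1/2) * ∑ s ∈ range (j+1), c s * (x s)^2 := by
    simp only [hS, hS', Finset.mul_sum, ← Finset.sum_add_distrib, ← Finset.sum_sub_distrib]
    apply Finset.sum_congr rfl
    intro s _
    simp only [hx]
    ring
  have h2 : ∑ s ∈ range (j+1), c s * x s * (y (j+1) - y (s+1)) =
      ∑ s ∈ range (j+1), ∑ k ∈ Ico (s+1) (j+1), c s * x s * x k := by
    apply Finset.sum_congr rfl
    intro s hs
    rw [← tele y (s+1) (j+1) (Finset.mem_range.mp hs), Finset.mul_sum]
  have h3 : ∑ s ∈ range (j+1), ∑ k ∈ Ico (s+1) (j+1), c s * x s * x k =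
      ∑ k ∈ range (j+1), x k * (∑ s ∈ range k, c s * x s) := by
    rw [Finset.range_eq_Ico, Finset.sum_Ico_Ico_comm' 0 (j+1) (fun s k => c s * x s * x k)]
    apply Finset.sum_congr rfl
    intro k _
    rw [Finset.mul_sum, ← Finset.range_eq_Ico]
    apply Finset.sum_congr rfl
    intro s _
    ring
  have hkey := key c x j hpos hmono
  rw [← hS] at hkey
  have hval : S^2 / (2 * c j) = τ ^ α / 2 * S^2 := by
    rw [hcjval]
    rw [div_eq_iff (by positivity)]
    field_simp
  have hmain : (1/2) * S' + τ ^ α / 2 * S^2 ≤ y (j+1) * S := by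
    rw [h2, h3] at h1
    rw [hval] at hkey
    linarith
  rw [hdy, hdy2, ge_iff_le, ← sub_nonneg]
  have heq : y (j+1) * ((1 / Real.Gamma (2 - α)) * S) -
      ((1/2) * ((1 / Real.Gamma (2 - α)) * S') +
        (τ ^ α * Real.Gamma (2 - α) / 2) * ((1 / Real.Gamma (2 - α)) * S)^2) =
      (y (j+1) * S - ((1/2) * S' + τ ^ α / 2 * S^2)) / Real.Gamma (2 - α) := by
    field_simp
  rw [heq]
  exact div_nonneg (by linarith) hΓ.le
end

section
/- Let 0 < α < 1, τ > 0, and let y : ℕ → ℝ be any sequence (a grid function on the grid t_j = jτ). Then for every j ≥ 0: y^{j} · Δ_{0t_j}^α y ≥ (1/2) · Δ_{0t_j}^α (y²) − (τ^α Γ(2−α)/(2(2 − 2^{1−α}))) · (Δ_{0t_j}^α y)², where Δ_{0t_j}^α (y²) denotes the same discrete operator applied to the sequence j ↦ (y^j)². -/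
/-- Abel/telescoping identity. -/
lemma abel_tel (w f : ℕ → ℝ) (n : ℕ) :
    ∑ s ∈ Finset.range (n + 1), w s * (f s - f (s + 1)) =
      w 0 * f 0 + (∑ s ∈ Finset.range n, (w (s + 1) - w s) * f (s + 1)) - w n * f (n + 1) := by
  induction n with
  | zero => simp; ring
  | succ m ih => rw [Finset.sum_range_succ, ih, Finset.sum_range_succ]; ring

lemma tel_sum (w : ℕ → ℝ) (m : ℕ) :
    ∑ s ∈ Finset.range (m + 1), (if s = 0 then w 0 else w s - w (s - 1)) = w m := by
  induction m with
  | zero => simp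
  | succ k ih => rw [Finset.sum_range_succ, ih]; simp

lemma cs_aux (F : Finset ℕ) (C z : ℕ → ℝ) (hC : ∀ i ∈ F, 0 ≤ C i) :
    (∑ i ∈ F, C i * z i) ^ 2 ≤ (∑ i ∈ F, C i) * ∑ i ∈ F, C i * z i ^ 2 := by
  have h := Finset.sum_mul_sq_le_sq_mul_sq F (fun i => Real.sqrt (C i))
    (fun i => Real.sqrt (C i) * z i)
  have e1 : ∀ i ∈ F, Real.sqrt (C i) * (Real.sqrt (C i) * z i) = C i * z i := by
    intro i hi; rw [← mul_assoc, Real.mul_self_sqrt (hC i hi)]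
  have e2 : ∀ i ∈ F, Real.sqrt (C i) ^ 2 = C i := fun i hi => Real.sq_sqrt (hC i hi)
  have e3 : ∀ i ∈ F, (Real.sqrt (C i) * z i) ^ 2 = C i * z i ^ 2 := by
    intro i hi; rw [mul_pow, Real.sq_sqrt (hC i hi)]
  rw [Finset.sum_congr rfl e1, Finset.sum_congr rfl e2, Finset.sum_congr rfl e3] at h
  exact h

/-- midpoint concavity of rpow -/
lemma rpow_mid {p : ℝ} (hp0 : 0 < p) (hp1 : p < 1) {a b : ℝ} (ha : 0 ≤ a) (hb : 0 ≤ b) :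
    a ^ p + b ^ p ≤ 2 * (((a + b) / 2) ^ p) := by
  have h := (Real.strictConcaveOn_rpow hp0 hp1).concaveOn.2 (Set.mem_Ici.mpr ha)
    (Set.mem_Ici.mpr hb) (by norm_num : (0:ℝ) ≤ 1/2) (by norm_num : (0:ℝ) ≤ 1/2) (by norm_num)
  simp only [smul_eq_mul] at h
  have e : (1/2 : ℝ) * a + (1/2) * b = (a + b) / 2 := by ring
  rw [e] at h
  linarith


set_option maxHeartbeats 1000000 in
/-- Lemma 2, inequality (23):
`y^{j} Δ^α y ≥ (1/2) Δ^α(y²) − (τ^α Γ(2-α)/(2(2 − 2^{1-α}))) (Δ^α y)²`. -/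
theorem discrete_caputo_ineq_lower (α τ : ℝ) (hα0 : 0 < α) (hα1 : α < 1)
    (hτ : 0 < τ) (y : ℕ → ℝ) :
    ∀ j : ℕ,
      y j * dCaputo α τ y j ≥
        (1 / 2) * dCaputo α τ (fun n => (y n) ^ 2) j -
          (τ ^ α * Real.Gamma (2 - α) / (2 * (2 - 2 ^ (1 - α)))) *
            (dCaputo α τ y j) ^ 2 := by
  intro j
  have hp0 : (0:ℝ) < 1 - α := by linarith
  have hp1 : (1:ℝ) - α < 1 := by linarith
  have hΓ : 0 < Real.Gamma (2 - α) := Real.Gamma_pos_of_pos (by linarith)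
  set Γ : ℝ := Real.Gamma (2 - α) with hΓdef
  have hΓτ : 0 < Γ * τ := mul_pos hΓ hτ
  set w : ℕ → ℝ :=
    fun s => ((((j - s + 1 : ℕ) : ℝ) * τ) ^ (1 - α) - (((j - s : ℕ) : ℝ) * τ) ^ (1 - α)) / (Γ * τ)
    with hwdef
  -- representation of dCaputo via w
  have hrep : ∀ z : ℕ → ℝ,
      dCaputo α τ z j = ∑ s ∈ Finset.range (j + 1), w s * (z (s + 1) - z s) := by
    intro z
    unfold dCaputo
    rw [Finset.mul_sum]
    refine Finset.sum_congr rfl fun s _ => ?_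
    simp only [hwdef, ← hΓdef]
    field_simp
  -- monotonicity of w
  have hmono : ∀ s : ℕ, s + 1 ≤ j → w s ≤ w (s + 1) := by
    intro s hs
    obtain ⟨k, hk⟩ : ∃ k, j - (s + 1) = k := ⟨_, rfl⟩
    have h1 : j - s = k + 1 := by omega
    have h2 : j - s + 1 = k + 2 := by omega
    have h3 : j - (s + 1) + 1 = k + 1 := by omega
    simp only [hwdef, hk, h1, h2, h3]
    have hmid := rpow_mid hp0 hp1 (a := (k : ℝ) * τ) (b := ((k : ℝ) + 2) * τ)
      (by positivity) (by positivity)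
    have e : (((k : ℝ) * τ + ((k : ℝ) + 2) * τ) / 2) = ((k : ℝ) + 1) * τ := by ring
    rw [e] at hmid
    have hnum : (((k + 2 : ℕ) : ℝ) * τ) ^ (1 - α) - (((k + 1 : ℕ) : ℝ) * τ) ^ (1 - α) ≤
        (((k + 1 : ℕ) : ℝ) * τ) ^ (1 - α) - (((k : ℕ) : ℝ) * τ) ^ (1 - α) := by
      push_cast
      linarith
    exact div_le_div_of_nonneg_right hnum hΓτ.le
  -- nonnegativity of w
  have hwnn : ∀ s, 0 ≤ w s := by
    intro s
    apply div_nonneg _ hΓτ.le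
    have hle : (((j - s : ℕ) : ℝ) * τ) ≤ (((j - s + 1 : ℕ) : ℝ) * τ) := by
      have : ((j - s : ℕ) : ℝ) ≤ ((j - s + 1 : ℕ) : ℝ) := by push_cast; linarith
      exact mul_le_mul_of_nonneg_right this hτ.le
    have := Real.rpow_le_rpow (by positivity) hle hp0.le
    linarith
  set g0 : ℝ := τ ^ (1 - α) / (Γ * τ) with hg0def
  set g1 : ℝ := ((2 * τ) ^ (1 - α) - τ ^ (1 - α)) / (Γ * τ) with hg1def
  have hτp : 0 < τ ^ (1 - α) := Real.rpow_pos_of_pos hτ _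
  have h2τ : (2 * τ) ^ (1 - α) = 2 ^ (1 - α) * τ ^ (1 - α) := Real.mul_rpow (by norm_num) hτ.le
  have h2p2 : (2:ℝ) ^ (1 - α) < 2 := by
    have := Real.rpow_lt_rpow_of_exponent_lt (x := 2) (by norm_num) hp1
    rwa [Real.rpow_one] at this
  have h2p1 : (1:ℝ) < 2 ^ (1 - α) := by
    have := Real.rpow_lt_rpow_of_exponent_lt (x := 2) (by norm_num) hp0
    rwa [Real.rpow_zero] at this
  have hg0pos : 0 < g0 := div_pos hτp hΓτ
  have hg1pos : 0 < g1 := by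
    apply div_pos _ hΓτ
    rw [h2τ]
    nlinarith [mul_pos (show (0:ℝ) < 2 ^ (1 - α) - 1 by linarith) hτp]
  have hg01 : g1 < g0 := by
    rw [hg0def, hg1def, div_lt_div_iff₀ hΓτ hΓτ, h2τ]
    nlinarith [mul_pos (show (0:ℝ) < 2 - 2 ^ (1 - α) by linarith) (mul_pos hτp hΓτ)]
  have hwj : w j = g0 := by
    simp only [hwdef, Nat.sub_self, hg0def]
    norm_num [Real.zero_rpow (by linarith : (1:ℝ) - α ≠ 0)]
  set c : ℝ := τ ^ α * Γ / (2 * (2 - 2 ^ (1 - α))) with hcdef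
  have hτap : τ ^ α * τ ^ (1 - α) = τ := by
    rw [← Real.rpow_add hτ]
    norm_num
  have h2c : 2 * c * (g0 - g1) = 1 := by
    rw [hcdef, hg0def, hg1def, h2τ]
    have hne1 : (2:ℝ) - 2 ^ (1 - α) ≠ 0 := by nlinarith
    field_simp
    linear_combination (2 - 2 ^ (1 - α)) * hτap
  set D : ℝ := dCaputo α τ y j with hDdef
  set u : ℕ → ℝ := fun s => y j - y s with hudef
  have huj : u j = 0 := by simp [hudef]
  set T : ℝ := ∑ s ∈ Finset.range (j + 1), w s * (u s ^ 2 - u (s + 1) ^ 2) with hTdef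
  have hD : D = ∑ s ∈ Finset.range (j + 1), w s * (u s - u (s + 1)) := by
    rw [hDdef, hrep y]
    refine Finset.sum_congr rfl fun s _ => ?_
    simp only [hudef]; ring
  have hsq : dCaputo α τ (fun n => (y n) ^ 2) j = 2 * y j * D - T := by
    have hmul : 2 * y j * D = ∑ s ∈ Finset.range (j + 1), 2 * y j * (w s * (y (s + 1) - y s)) := by
      rw [hDdef, hrep y, Finset.mul_sum]
    rw [hrep, hmul, hTdef, ← Finset.sum_sub_distrib]
    refine Finset.sum_congr rfl fun s _ => ?_
    simp only [hudef]; ring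
  -- telescoped forms
  have hDt : D = w 0 * u 0 + (∑ s ∈ Finset.range j, (w (s + 1) - w s) * u (s + 1)) - w j * u (j + 1) :=
    hD.trans (abel_tel w u j)
  have hTt : T = w 0 * u 0 ^ 2 + (∑ s ∈ Finset.range j, (w (s + 1) - w s) * u (s + 1) ^ 2)
      - w j * u (j + 1) ^ 2 := by
    rw [hTdef]
    exact abel_tel w (fun s => u s ^ 2) j
  set C : ℕ → ℝ := fun s => if s = j then 0 else if s = 0 then w 0 else w s - w (s - 1) with hCdef
  have habs : ∀ z : ℕ → ℝ, z j = 0 →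
      w 0 * z 0 + (∑ s ∈ Finset.range j, (w (s + 1) - w s) * z (s + 1)) =
        ∑ s ∈ Finset.range (j + 1), C s * z s := by
    intro z hz
    rw [Finset.sum_range_succ']
    have h1 : ∀ s ∈ Finset.range j, (w (s + 1) - w s) * z (s + 1) = C (s + 1) * z (s + 1) := by
      intro s _
      by_cases h : s + 1 = j
      · rw [h, hz, mul_zero, mul_zero]
      · simp [hCdef, h]
    have h2 : C 0 * z 0 = w 0 * z 0 := by
      by_cases h : j = 0
      · subst h; rw [hz, mul_zero, mul_zero]
      · have h0 : (0:ℕ) ≠ j := fun hh => h hh.symm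
        simp [hCdef, h0]
    rw [Finset.sum_congr rfl h1, h2]
    ring
  have hCnn : ∀ s ∈ Finset.range (j + 1), 0 ≤ C s := by
    intro s hs
    have hsle : s ≤ j := by simpa [Nat.lt_succ_iff] using hs
    simp only [hCdef]
    split_ifs with h1 h2
    · exact le_rfl
    · exact hwnn 0
    · have hs1 : s - 1 + 1 = s := by omega
      have := hmono (s - 1) (by omega)
      rw [hs1] at this
      linarith
  set A : ℝ := ∑ s ∈ Finset.range (j + 1), C s * u s with hAdef
  set B : ℝ := ∑ s ∈ Finset.range (j + 1), C s * u s ^ 2 with hBdef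
  have hB0 : 0 ≤ B :=
    Finset.sum_nonneg fun s hs => mul_nonneg (hCnn s hs) (sq_nonneg _)
  have hCS : A ^ 2 ≤ (∑ s ∈ Finset.range (j + 1), C s) * B :=
    cs_aux _ C u hCnn
  have hS : (∑ s ∈ Finset.range (j + 1), C s) ≤ g1 := by
    rcases Nat.eq_zero_or_pos j with hj0 | hjpos
    · subst hj0
      simpa [hCdef] using hg1pos.le
    · obtain ⟨m, rfl⟩ : ∃ m, j = m + 1 := ⟨j - 1, by omega⟩
      have e0 : ∑ s ∈ Finset.range (m + 1 + 1), C s = ∑ s ∈ Finset.range (m + 1), C s := by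
        rw [Finset.sum_range_succ]
        simp [hCdef]
      have e1 : ∑ s ∈ Finset.range (m + 1), C s =
          ∑ s ∈ Finset.range (m + 1), (if s = 0 then w 0 else w s - w (s - 1)) := by
        refine Finset.sum_congr rfl fun s hs => ?_
        have hne : s ≠ m + 1 := by
          have := Finset.mem_range.mp hs; omega
        simp [hCdef, hne]
      rw [e0, e1, tel_sum]
      have h1 : (m + 1) - m = 1 := by omega
      have h2 : (m + 1) - m + 1 = 2 := by omega
      apply le_of_eq
      simp only [hwdef, h1, h2, hg1def]
      norm_num
  have hA2 : A ^ 2 ≤ g1 * B :=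
    hCS.trans (mul_le_mul_of_nonneg_right hS hB0)
  have hDA : D = A - g0 * u (j + 1) := by
    rw [hDt, habs u huj, hwj]
  have hTB : T = B - g0 * u (j + 1) ^ 2 := by
    rw [hTt, habs (fun s => u s ^ 2) (by simp [huj]), hwj]
  set u1 : ℝ := u (j + 1) with hu1def
  clear_value A B D T u1 g0 g1 c
  clear hrep hmono hwnn habs hCnn hCS hS hD hDt hTt hwj
  have key : 0 ≤ g1 * (g0 - g1) * B - g0 * g1 * (g0 - g1) * u1 ^ 2 + g1 * (A - g0 * u1) ^ 2 := by
    nlinarith [mul_le_mul_of_nonneg_left hA2 (by linarith : (0:ℝ) ≤ g0 - g1),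
      mul_nonneg hg0pos.le (sq_nonneg (A - g1 * u1))]
  have key2 : 0 ≤ ((1 / 2) * T + c * D ^ 2) * (2 * g1 * (g0 - g1)) := by
    have expand : ((1 / 2) * T + c * D ^ 2) * (2 * g1 * (g0 - g1)) =
        g1 * (g0 - g1) * B - g0 * g1 * (g0 - g1) * u1 ^ 2 + g1 * (A - g0 * u1) ^ 2 := by
      rw [hTB, hDA]
      linear_combination (g1 * (A - g0 * u1) ^ 2) * h2c
    rw [expand]; exact key
  have hM : 0 < 2 * g1 * (g0 - g1) := mul_pos (mul_pos two_pos hg1pos) (by linarith)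
  have hfin : 0 ≤ (1 / 2) * T + c * D ^ 2 :=
    le_of_mul_le_mul_right (by rw [zero_mul]; exact key2) hM
  rw [ge_iff_le, hsq]
  linarith
end

section
/- Let 0 < α < 1, τ > 0, 0 ≤ σ ≤ 1, and let y : ℕ → ℝ be any sequence (a grid function on the grid t_j = jτ). Then for every j ≥ 0: (σ y^{j+1} + (1−σ) y^{j}) · Δ_{0t_j}^α y ≥ (1/2) · Δ_{0t_j}^α (y²) + (τ^α Γ(2−α)/(2(2 − 2^{1−α}))) · ((3 − 2^{1−α})σ − 1) · (Δ_{0t_j}^α y)², where Δ_{0t_j}^α (y²) denotes the same discrete operator applied to the sequence j ↦ (y^j)². -/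
private lemma abel_aux (b μ v : ℕ → ℝ)
    (hμ : ∀ s, μ s = if s = 0 then b 0 else b s - b (s - 1)) : ∀ n : ℕ,
    ∑ s ∈ Finset.range (n + 1), b s * (v s - v (s + 1))
      = (∑ s ∈ Finset.range (n + 1), μ s * v s) - b n * v (n + 1) := by
  intro n
  induction n with
  | zero => simp [hμ 0]; ring
  | succ n ih =>
      rw [Finset.sum_range_succ, ih, Finset.sum_range_succ (fun s => μ s * v s) (n + 1),
        hμ (n + 1)]
      simp only [Nat.succ_ne_zero, if_false, Nat.add_sub_cancel]
      ring

private lemma midpoint_rpow_s12 (p : ℝ) (hp0 : 0 ≤ p) (hp1 : p ≤ 1) (x t : ℝ)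
    (hx : 0 ≤ x) (ht : 0 ≤ t) : x ^ p + (x + 2 * t) ^ p ≤ 2 * (x + t) ^ p := by
  have h := (Real.concaveOn_rpow hp0 hp1).2 (Set.mem_Ici.2 hx)
    (Set.mem_Ici.2 (by linarith : (0:ℝ) ≤ x + 2 * t))
    (by norm_num : (0:ℝ) ≤ 1 / 2) (by norm_num : (0:ℝ) ≤ 1 / 2) (by norm_num)
  simp only [smul_eq_mul] at h
  have e : (1 / 2 : ℝ) * x + (1 / 2 : ℝ) * (x + 2 * t) = x + t := by ring
  rw [e] at h
  linarith


set_option maxHeartbeats 1000000 in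
/-- Corollary 2, inequality (26): for `0 ≤ σ ≤ 1`,
`(σ y^{j+1} + (1-σ) y^j) Δ^α y ≥ (1/2) Δ^α(y²) +
  (τ^α Γ(2-α)/(2(2 − 2^{1-α}))) ((3 − 2^{1-α})σ − 1) (Δ^α y)²`. -/
theorem discrete_caputo_ineq_sigma (α τ σ : ℝ) (hα0 : 0 < α) (hα1 : α < 1)
    (hτ : 0 < τ) (hσ0 : 0 ≤ σ) (hσ1 : σ ≤ 1) (y : ℕ → ℝ) :
    ∀ j : ℕ,
      (σ * y (j + 1) + (1 - σ) * y j) * dCaputo α τ y j ≥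
        (1 / 2) * dCaputo α τ (fun n => (y n) ^ 2) j +
          (τ ^ α * Real.Gamma (2 - α) / (2 * (2 - 2 ^ (1 - α)))) *
            ((3 - 2 ^ (1 - α)) * σ - 1) * (dCaputo α τ y j) ^ 2 := by
  intro j
  have hp0 : (0:ℝ) < 1 - α := by linarith
  have hp1 : (1:ℝ) - α < 1 := by linarith
  set G : ℝ := Real.Gamma (2 - α) with hGdef
  have hG : 0 < G := Real.Gamma_pos_of_pos (by linarith)
  set A : ℝ := τ ^ α with hAdef
  have hA : 0 < A := Real.rpow_pos_of_pos hτ α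
  set M : ℝ := τ ^ (1 - α) with hMdef
  have hM : 0 < M := Real.rpow_pos_of_pos hτ (1 - α)
  set E : ℝ := (2:ℝ) ^ (1 - α) with hEdef
  have hE1 : 1 ≤ E := by
    have h := Real.rpow_le_rpow_of_exponent_le one_le_two hp0.le (x := 2) (y := 0)
    rwa [Real.rpow_zero] at h
  have hE2 : E < 2 := by
    calc E < 2 ^ (1:ℝ) := Real.rpow_lt_rpow_of_exponent_lt one_lt_two hp1
    _ = 2 := Real.rpow_one 2
  have hm0 : (0:ℝ) < 2 - E := by linarith
  have hAM : A * M = τ := by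
    rw [hAdef, hMdef, ← Real.rpow_add hτ]
    norm_num
  set b : ℕ → ℝ := fun s =>
    (((j - s + 1 : ℕ) : ℝ) * τ) ^ (1 - α) - (((j - s : ℕ) : ℝ) * τ) ^ (1 - α) with hbdef
  set μ : ℕ → ℝ := fun s => if s = 0 then b 0 else b s - b (s - 1) with hμdef
  have hμeq : ∀ s, μ s = if s = 0 then b 0 else b s - b (s - 1) := fun s => rfl
  -- value of dCaputo on a general sequence
  have key : ∀ v : ℕ → ℝ, dCaputo α τ v j
      = (∑ s ∈ Finset.range (j + 1), μ s * (v (j + 1) - v s)) / (G * τ) := by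
    intro v
    have ha := abel_aux b μ (fun s => v (j + 1) - v s) hμeq j
    simp only [sub_self, mul_zero, sub_zero] at ha
    simp only [dCaputo, hGdef]
    rw [Finset.sum_congr rfl (fun s (_ : s ∈ Finset.range (j + 1)) =>
      (by simp only [hbdef]; ring :
        (((((j : ℕ) - s + 1 : ℕ) : ℝ) * τ) ^ (1 - α) -
            ((((j : ℕ) - s : ℕ) : ℝ) * τ) ^ (1 - α)) * (v (s + 1) - v s) / τ
          = b s * ((v (j + 1) - v s) - (v (j + 1) - v (s + 1))) / τ))]
    rw [← Finset.sum_div, ha]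
    ring
  set P : ℝ := ∑ s ∈ Finset.range (j + 1), μ s * (y (j + 1) - y s) with hPdef
  set Q : ℝ := ∑ s ∈ Finset.range (j + 1), μ s * (y (j + 1) - y s) ^ 2 with hQdef
  have hDy : dCaputo α τ y j = P / (G * τ) := key y
  have hDy2 : dCaputo α τ (fun n => (y n) ^ 2) j = (2 * y (j + 1) * P - Q) / (G * τ) := by
    have h := key (fun n => (y n) ^ 2)
    try simp only at h
    rw [h]
    congr 1
    rw [Finset.sum_congr rfl (fun s (_ : s ∈ Finset.range (j + 1)) =>
      (by ring : μ s * ((y (j + 1)) ^ 2 - (y s) ^ 2)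
        = 2 * y (j + 1) * (μ s * (y (j + 1) - y s)) - μ s * (y (j + 1) - y s) ^ 2))]
    rw [Finset.sum_sub_distrib, ← Finset.mul_sum]
  -- nonnegativity of the weights
  have hμnn : ∀ s ∈ Finset.range (j + 1), 0 ≤ μ s := by
    intro s hs
    rw [hμeq s]
    split_ifs with h0
    · simp only [hbdef, Nat.sub_zero]
      have h1 : ((j:ℝ)) * τ ≤ ((j + 1 : ℕ) : ℝ) * τ := by push_cast; nlinarith
      have h2 := Real.rpow_le_rpow (by positivity) h1 hp0.le
      linarith
    · simp only [hbdef]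
      have hsj : s ≤ j := by simpa [Nat.lt_succ_iff] using hs
      have e2 : j - (s - 1) = (j - s) + 1 := by omega
      rw [e2]
      have hmid := midpoint_rpow_s12 (1 - α) hp0.le hp1.le (((j - s : ℕ) : ℝ) * τ) τ
        (by positivity) hτ.le
      have c1 : (((j - s + 1 : ℕ) : ℝ)) * τ = ((j - s : ℕ) : ℝ) * τ + τ := by push_cast; ring
      have c2 : (((j - s + 1 + 1 : ℕ) : ℝ)) * τ = ((j - s : ℕ) : ℝ) * τ + 2 * τ := by
        push_cast; ring
      rw [c1, c2]
      linarith
  -- total mass of the weights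
  have hbj : b j = M := by
    have h0 : j - j = 0 := Nat.sub_self j
    simp only [hbdef, h0, zero_add, Nat.cast_one, Nat.cast_zero, one_mul, zero_mul,
      Real.zero_rpow hp0.ne', sub_zero, hMdef]
  have hsumμ : ∑ s ∈ Finset.range (j + 1), μ s = M := by
    have ha := abel_aux b μ (fun _ => (1:ℝ)) hμeq j
    simp only [sub_self, mul_zero, mul_one, Finset.sum_const_zero] at ha
    rw [hbj] at ha
    linarith
  -- lower bound for the last weight
  have hμj : M * (2 - E) ≤ μ j := by
    rcases Nat.eq_zero_or_pos j with hj | hj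
    · subst hj
      have h0 : μ 0 = b 0 := by rw [hμeq 0, if_pos rfl]
      rw [h0, hbj]
      nlinarith
    · rw [hμeq j, if_neg hj.ne']
      have hbj1 : b (j - 1) = E * M - M := by
        have e2 : j - (j - 1) = 1 := by omega
        simp only [hbdef, e2]
        have c1 : ((1 + 1 : ℕ) : ℝ) = 2 := by norm_num
        have c2 : ((1 : ℕ) : ℝ) = 1 := by norm_num
        rw [c1, c2, one_mul, hEdef, hMdef, ← Real.mul_rpow (by norm_num) hτ.le]
      rw [hbj, hbj1]
      nlinarith
  -- Cauchy–Schwarz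
  have hCS : P ^ 2 ≤ M * Q := by
    have h := Finset.sum_mul_sq_le_sq_mul_sq (Finset.range (j + 1))
      (fun s => Real.sqrt (μ s)) (fun s => Real.sqrt (μ s) * (y (j + 1) - y s))
    have e1 : ∑ s ∈ Finset.range (j + 1),
        Real.sqrt (μ s) * (Real.sqrt (μ s) * (y (j + 1) - y s)) = P :=
      Finset.sum_congr rfl fun s hs => by
        rw [← mul_assoc, Real.mul_self_sqrt (hμnn s hs)]
    have e2 : ∑ s ∈ Finset.range (j + 1), (Real.sqrt (μ s)) ^ 2 = M := by
      rw [Finset.sum_congr rfl fun s hs => Real.sq_sqrt (hμnn s hs), hsumμ]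
    have e3 : ∑ s ∈ Finset.range (j + 1),
        (Real.sqrt (μ s) * (y (j + 1) - y s)) ^ 2 = Q :=
      Finset.sum_congr rfl fun s hs => by
        rw [mul_pow, Real.sq_sqrt (hμnn s hs)]
    rw [e1, e2, e3] at h
    exact h
  have hQj : μ j * (y (j + 1) - y j) ^ 2 ≤ Q :=
    Finset.single_le_sum (f := fun s => μ s * (y (j + 1) - y s) ^ 2)
      (fun s hs => mul_nonneg (hμnn s hs) (sq_nonneg _)) (Finset.self_mem_range_succ j)
  have h2 : M * (2 - E) * (y (j + 1) - y j) ^ 2 ≤ Q :=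
    le_trans (mul_le_mul_of_nonneg_right hμj (sq_nonneg _)) hQj
  clear_value G A M E P Q
  clear hμj hQj hμnn hμeq key hbj hsumμ hbdef hμdef μ b hPdef hQdef
  -- the core inequality
  have hcore : 0 ≤ Q / 2 - (1 - σ) * (y (j + 1) - y j) * P
      - ((3 - E) * σ - 1) * P ^ 2 / (2 * M * (2 - E)) := by
    have h3 := sq_nonneg (M * (2 - E) * (y (j + 1) - y j) - P)
    have hMm : (0:ℝ) < 2 * M * (2 - E) := by positivity
    have hkey : ((3 - E) * σ - 1) * P ^ 2 / (2 * M * (2 - E))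
        ≤ Q / 2 - (1 - σ) * (y (j + 1) - y j) * P := by
      rw [div_le_iff₀ hMm]
      nlinarith [mul_nonneg (mul_nonneg hσ0 hm0.le) (sub_nonneg.2 hCS),
        mul_nonneg (sub_nonneg.2 hσ1) (mul_nonneg (mul_nonneg hM.le hm0.le) (sub_nonneg.2 h2)),
        mul_nonneg (sub_nonneg.2 hσ1) h3]
    linarith
  -- assemble
  rw [ge_iff_le, hDy, hDy2, ← sub_nonneg]
  have expand : (σ * y (j + 1) + (1 - σ) * y j) * (P / (G * τ)) -
      (1 / 2 * ((2 * y (j + 1) * P - Q) / (G * τ)) +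
        A * G / (2 * (2 - E)) * ((3 - E) * σ - 1) * (P / (G * τ)) ^ 2)
      = (Q / 2 - (1 - σ) * (y (j + 1) - y j) * P
          - ((3 - E) * σ - 1) * P ^ 2 / (2 * M * (2 - E))) / (G * τ) := by
    rw [← hAM]
    clear hDy hDy2 hAM hAdef hMdef hEdef hGdef
    field_simp [hG.ne', hA.ne', hM.ne', hm0.ne']
    ring
  rw [expand]
  exact div_nonneg hcore (by positivity)
end

section
/- Let l, T > 0, N, j₀ ∈ ℕ with N ≥ 2, h = l/N, τ = T/j₀, grid points x_i = ih and t_j = jτ. Let α : {0,…,N} → (0,1) with α_i = α(x_i), let c₁ > 0, and for each time level j let coefficients a_i^{j+1/2} (1 ≤ i ≤ N) satisfy a_i^{j+1/2} ≥ c₁, d_i^{j+1/2} ≥ 0 (1 ≤ i ≤ N−1), and let φ_i^{j+1/2} be given (1 ≤ i ≤ N−1). Suppose σ ≥ 1/(3 − 2^{1−min_i α_i}) and σ ≤ 1, and y_i^j solves the difference scheme Δ_{0t_j}^{α_i} y_i = (Λ(σ y^{j+1} + (1−σ)y^j))_i + φ_i^{j+1/2} for 1 ≤ i ≤ N−1 and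 0 ≤ j ≤ j₀−1, with y_0^j = y_N^j = 0 for all j and y_i^0 = u₀(x_i). Then for every 0 ≤ j ≤ j₀−1: ( (1/Γ(2−α_i)) , Σ_{j'=0}^{j} (t_{j−j'+1}^{1−α_i} − t_{j−j'}^{1−α_i}) (y^{j'+1})² ) + c₁ Σ_{j'=0}^{j} ‖σ y_x̄^{j'+1} + (1−σ) y_x̄^{j'}‖₀'² · τ ≤ (l²/(2c₁)) Σ_{j'=0}^{j} ‖φ^{j'}‖₀² · τ + ( t_{j+1}^{1−α_i}/Γ(2−α_i) , u₀²(x_i) ). -/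
open Finset

set_option maxHeartbeats 1000000

/-- Alikhanov's key pointwise inequality. -/
lemma key_ineq (c : ℕ → ℝ) (hc0 : ∀ k, 0 ≤ c k) (hca : ∀ k, c (k+1) ≤ c k)
    (σ : ℝ) (hσ : σ ^ 2 * c 1 ≤ (2*σ - 1) * c 0) (y : ℕ → ℝ) (j : ℕ) :
    (1/2) * ∑ s ∈ range (j+1), c (j - s) * ((y (s+1))^2 - (y s)^2)
      ≤ ∑ s ∈ range (j+1), c (j - s) * ((y (s+1) - y s) * (σ * y (j+1) + (1-σ) * y j)) := by
  set δ : ℝ := y (j+1) - y j with hδ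
  set F : ℕ → ℝ := fun m => (1/2) * (y j - y m)^2 + σ * δ * (y j - y m) with hF
  clear_value δ F
  have hdiff : ∑ s ∈ range (j+1), c (j - s) * ((y (s+1) - y s) * (σ * y (j+1) + (1-σ) * y j))
      - (1/2) * ∑ s ∈ range (j+1), c (j - s) * ((y (s+1))^2 - (y s)^2)
      = ∑ s ∈ range (j+1), c (j - s) * (F s - F (s+1)) := by
    rw [Finset.mul_sum, ← Finset.sum_sub_distrib]
    refine Finset.sum_congr rfl fun s _ => ?_
    simp only [hF, hδ]; ring
  have hFj : F j = 0 := by simp [hF]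
  have hFj1 : F (j+1) = (1/2)*δ^2 - σ*δ^2 := by simp only [hF, hδ]; ring
  have hFlb : ∀ m, -(σ^2 * δ^2)/2 ≤ F m := by
    intro m
    have h1 := sq_nonneg (y j - y m + σ * δ)
    simp only [hF]; nlinarith [h1]
  have hsplit : ∑ s ∈ range (j+1), c (j - s) * (F s - F (s+1))
      = (∑ s ∈ range j, c (j - s) * (F s - F (s+1))) + c 0 * (F j - F (j+1)) := by
    rw [Finset.sum_range_succ, Nat.sub_self]
  have habel : ∑ s ∈ range j, c (j - s) * (F s - F (s+1))
      = c (j + 1) * F 0 - c 1 * F j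
        + ∑ s ∈ range j, (c (j - s) - c (j - s + 1)) * F s := by
    have e1 : ∀ s ∈ range j, c (j - s) * (F s - F (s+1))
        = (c (j - s + 1) * F s - c (j - (s+1) + 1) * F (s+1)) + (c (j - s) - c (j - s + 1)) * F s := by
      intro s hs
      have hs' : s < j := Finset.mem_range.mp hs
      have e : j - (s+1) + 1 = j - s := by omega
      rw [e]; ring
    rw [Finset.sum_congr rfl e1, Finset.sum_add_distrib,
      Finset.sum_range_sub' (fun s => c (j - s + 1) * F s) j]
    simp only [Nat.sub_zero, Nat.sub_self]
  have htel : ∑ s ∈ range j, (c (j - s) - c (j - s + 1)) = c 1 - c (j+1) := by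
    have e : ∑ s ∈ range j, (c (j - s) - c (j - s + 1))
        = ∑ s ∈ range j, (c (s+1) - c (s+1+1)) := by
      rw [← Finset.sum_range_reflect (fun s => c (s+1) - c (s+1+1)) j]
      refine Finset.sum_congr rfl fun s hs => ?_
      have hs' : s < j := Finset.mem_range.mp hs
      have e1 : j - 1 - s + 1 = j - s := by omega
      rw [e1]
    rw [e, Finset.sum_range_sub' (fun s => c (s+1)) j]
  have hw : (c 1 - c (j+1)) * (-(σ^2*δ^2)/2)
      ≤ ∑ s ∈ range j, (c (j - s) - c (j - s + 1)) * F s := by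
    calc (c 1 - c (j+1)) * (-(σ^2*δ^2)/2)
        = ∑ s ∈ range j, (c (j - s) - c (j - s + 1)) * (-(σ^2*δ^2)/2) := by
          rw [← Finset.sum_mul, htel]
      _ ≤ _ := by
          refine Finset.sum_le_sum fun s _ => ?_
          exact mul_le_mul_of_nonneg_left (hFlb s) (by linarith [hca (j - s)])
  have hg0 : c (j+1) * (-(σ^2*δ^2)/2) ≤ c (j+1) * F 0 :=
    mul_le_mul_of_nonneg_left (hFlb 0) (hc0 (j+1))
  have hfin : σ^2 * c 1 * (δ^2/2) ≤ (2*σ - 1) * c 0 * (δ^2/2) :=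
    mul_le_mul_of_nonneg_right hσ (by positivity)
  have hclast : c 0 * (F j - F (j+1)) = (2*σ-1) * c 0 * (δ^2/2) := by
    rw [hFj, hFj1]; ring
  have hc1Fj : c 1 * F j = 0 := by rw [hFj]; ring
  linarith [hdiff, hsplit, habel, hw, hg0, hfin, hclast, hc1Fj]

/-- Telescoping of the double Caputo sum. -/
lemma telescope2 (c W : ℕ → ℝ) (j : ℕ) :
    ∑ j' ∈ range (j+1), ∑ s ∈ range (j'+1), c (j' - s) * (W (s+1) - W s)
      = ∑ s ∈ range (j+1), c (j - s) * W (s+1) - (∑ k ∈ range (j+1), c k) * W 0 := by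
  induction j with
  | zero => simp; ring
  | succ j ih =>
    rw [Finset.sum_range_succ
      (fun j' => ∑ s ∈ range (j'+1), c (j' - s) * (W (s+1) - W s)) (j+1), ih]
    have expand : ∑ s ∈ range (j+1+1), c (j+1-s) * (W (s+1) - W s)
        = ∑ s ∈ range (j+2), c (j+1-s) * W (s+1) - ∑ s ∈ range (j+2), c (j+1-s) * W s := by
      rw [← Finset.sum_sub_distrib]
      exact Finset.sum_congr rfl fun s _ => by ring
    have shift : ∑ s ∈ range (j+2), c (j+1-s) * W s
        = (∑ s ∈ range (j+1), c (j-s) * W (s+1)) + c (j+1) * W 0 := by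
      rw [Finset.sum_range_succ' (fun s => c (j+1-s) * W s) (j+1)]
      congr 1
      refine Finset.sum_congr rfl fun s _ => ?_
      have e : j + 1 - (s+1) = j - s := by omega
      rw [e]
    rw [expand, shift, Finset.sum_range_succ (fun k => c k) (j+1)]
    ring

/-- Summation by parts with zero boundary values. -/
lemma sbp (N : ℕ) (hN : 1 ≤ N) (v b : ℕ → ℝ) (hv0 : v 0 = 0) (hvN : v N = 0) :
    ∑ i ∈ Finset.Icc 1 (N-1), v i * (b (i+1) - b i)
      = -∑ i ∈ Finset.Icc 1 N, b i * (v i - v (i-1)) := by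
  have htel : ∑ i ∈ Finset.Icc 1 N, (v i * b (i+1) - v (i-1) * b i) = 0 := by
    have e : ∑ i ∈ Finset.Icc 1 N, (v i * b (i+1) - v (i-1) * b i)
        = ∑ k ∈ Finset.range N, (v (k+1) * b (k+1+1) - v k * b (k+1)) := by
      rw [← Finset.Ico_add_one_right_eq_Icc, Finset.sum_Ico_eq_sum_range]
      refine Finset.sum_congr (by congr 1 <;> omega) fun k _ => ?_
      have e1 : 1 + k = k + 1 := by omega
      rw [e1]
      norm_num
    rw [e, Finset.sum_range_sub (fun m => v m * b (m+1)) N, hv0, hvN]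
    ring
  have hsplit : Finset.Icc 1 N = insert N (Finset.Icc 1 (N-1)) := by
    ext m; simp only [Finset.mem_Icc, Finset.mem_insert]; omega
  have hNnot : N ∉ Finset.Icc 1 (N-1) := by simp [Finset.mem_Icc]; omega
  have hexp : ∑ i ∈ Finset.Icc 1 N, (v i * b (i+1) - v (i-1) * b i)
      = ∑ i ∈ Finset.Icc 1 N, v i * (b (i+1) - b i)
        + ∑ i ∈ Finset.Icc 1 N, b i * (v i - v (i-1)) := by
    rw [← Finset.sum_add_distrib]
    exact Finset.sum_congr rfl fun i _ => by ring
  have h2 : ∑ i ∈ Finset.Icc 1 N, v i * (b (i+1) - b i)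
      = ∑ i ∈ Finset.Icc 1 (N-1), v i * (b (i+1) - b i) := by
    rw [hsplit, Finset.sum_insert hNnot, hvN]
    ring
  rw [hexp, h2] at htel
  linarith [htel]


section
variable (N : ℕ)

/-- Discrete Friedrichs inequality. -/
lemma friedrichs (hN : 1 ≤ N) (h : ℝ) (hh : 0 < h) (v : ℕ → ℝ) (hv0 : v 0 = 0) :
    ∑ i ∈ Finset.Icc 1 (N-1), h * (v i)^2
      ≤ ((N:ℝ)*h)^2/2 * ∑ i ∈ Finset.Icc 1 N, h * ((v i - v (i-1))/h)^2 := by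
  set S := ∑ i ∈ Finset.Icc 1 N, (v i - v (i-1))^2 with hS
  have hSnn : 0 ≤ S := Finset.sum_nonneg fun i _ => sq_nonneg _
  have hRHS : ∑ i ∈ Finset.Icc 1 N, h * ((v i - v (i-1))/h)^2 = S / h := by
    rw [hS, Finset.sum_div]
    refine Finset.sum_congr rfl fun i _ => ?_
    field_simp
  have hvi : ∀ i ∈ Finset.Icc 1 (N-1), (v i)^2 ≤ (i:ℝ) * S := by
    intro i hi
    obtain ⟨hi1, hi2⟩ := Finset.mem_Icc.mp hi
    have hvtel : v i = ∑ k ∈ Finset.range i, (v (k+1) - v k) := by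
      rw [Finset.sum_range_sub (fun k => v k) i, hv0, sub_zero]
    have hcs : (v i)^2 ≤ (∑ k ∈ Finset.range i, (1:ℝ)^2) * ∑ k ∈ Finset.range i, (v (k+1) - v k)^2 := by
      rw [hvtel]
      calc (∑ k ∈ Finset.range i, (v (k+1) - v k))^2
          = (∑ k ∈ Finset.range i, 1 * (v (k+1) - v k))^2 := by simp
        _ ≤ _ := Finset.sum_mul_sq_le_sq_mul_sq _ _ _
    have hsub : ∑ k ∈ Finset.range i, (v (k+1) - v k)^2 ≤ S := by
      have e : ∑ k ∈ Finset.range i, (v (k+1) - v k)^2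
          = ∑ m ∈ Finset.Icc 1 i, (v m - v (m-1))^2 := by
        rw [← Finset.Ico_add_one_right_eq_Icc, Finset.sum_Ico_eq_sum_range]
        refine Finset.sum_congr (by congr 1 <;> omega) fun k _ => ?_
        have e1 : 1 + k = k + 1 := by omega
        rw [e1]
        norm_num
      rw [e, hS]
      refine Finset.sum_le_sum_of_subset_of_nonneg ?_ fun _ _ _ => sq_nonneg _
      exact Finset.Icc_subset_Icc_right (by omega)
    calc (v i)^2 ≤ (∑ k ∈ Finset.range i, (1:ℝ)^2) * ∑ k ∈ Finset.range i, (v (k+1) - v k)^2 := hcs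
      _ = (i:ℝ) * ∑ k ∈ Finset.range i, (v (k+1) - v k)^2 := by simp
      _ ≤ (i:ℝ) * S := by
          exact mul_le_mul_of_nonneg_left hsub (by positivity)
  have hGauss : ∑ i ∈ Finset.Icc 1 (N-1), (i:ℝ) ≤ (N:ℝ)^2/2 := by
    have h1 : (∑ i ∈ Finset.Icc 1 (N-1), i) ≤ ∑ i ∈ Finset.range N, i := by
      refine Finset.sum_le_sum_of_subset ?_
      intro m hm
      simp only [Finset.mem_Icc] at hm
      exact Finset.mem_range.mpr (by omega)
    have h2 : (∑ i ∈ Finset.range N, i) * 2 = N * (N-1) := Finset.sum_range_id_mul_two N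
    have h3 : (∑ i ∈ Finset.Icc 1 (N-1), i) * 2 ≤ N * N := by
      calc (∑ i ∈ Finset.Icc 1 (N-1), i) * 2 ≤ (∑ i ∈ Finset.range N, i) * 2 := by omega
        _ = N * (N-1) := h2
        _ ≤ N * N := Nat.mul_le_mul_left N (by omega)
    have h4 : ((∑ i ∈ Finset.Icc 1 (N-1), i : ℕ) : ℝ) * 2 ≤ (N:ℝ) * N := by
      exact_mod_cast h3
    have h5 : ((∑ i ∈ Finset.Icc 1 (N-1), i : ℕ) : ℝ) = ∑ i ∈ Finset.Icc 1 (N-1), (i:ℝ) := by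
      push_cast; ring
    nlinarith [h4, h5]
  calc ∑ i ∈ Finset.Icc 1 (N-1), h * (v i)^2
      ≤ ∑ i ∈ Finset.Icc 1 (N-1), h * ((i:ℝ) * S) :=
        Finset.sum_le_sum fun i hi => mul_le_mul_of_nonneg_left (hvi i hi) hh.le
    _ = h * S * ∑ i ∈ Finset.Icc 1 (N-1), (i:ℝ) := by
        rw [Finset.mul_sum]
        exact Finset.sum_congr rfl fun i _ => by ring
    _ ≤ h * S * ((N:ℝ)^2/2) := by
        exact mul_le_mul_of_nonneg_left hGauss (by positivity)
    _ = ((N:ℝ)*h)^2/2 * (S/h) := by field_simp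
    _ = ((N:ℝ)*h)^2/2 * ∑ i ∈ Finset.Icc 1 N, h * ((v i - v (i-1))/h)^2 := by rw [hRHS]

end

/-- The spatial energy estimate at one time level. -/
lemma levelE (N : ℕ) (hN : 2 ≤ N) (h c₁ l τ : ℝ) (hh : 0 < h) (hc₁ : 0 < c₁)
    (hl : 0 < l) (hτ : 0 < τ) (hlh : (N:ℝ) * h = l)
    (av dv φv vv g : ℕ → ℝ)
    (ha : ∀ i, 1 ≤ i → i ≤ N → c₁ ≤ av i)
    (hd : ∀ i, 1 ≤ i → i ≤ N - 1 → 0 ≤ dv i)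
    (hv0 : vv 0 = 0) (hvN : vv N = 0)
    (hg : ∀ i, 1 ≤ i → i ≤ N - 1 → g i =
      ((av (i+1) * (vv (i+1) - vv i) / h - av i * (vv i - vv (i-1)) / h) / h
        - dv i * vv i) + φv i) :
    2*τ*∑ i ∈ Finset.Icc 1 (N-1), h * (vv i * g i)
      ≤ -(τ * c₁ * ∑ i ∈ Finset.Icc 1 N, h * ((vv i - vv (i-1))/h)^2)
        + τ * (l^2/(2*c₁)) * ∑ i ∈ Finset.Icc 1 (N-1), h * (φv i)^2 := by
  set SX := ∑ i ∈ Finset.Icc 1 N, h * ((vv i - vv (i-1))/h)^2 with hSXd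
  set Sφ := ∑ i ∈ Finset.Icc 1 (N-1), h * (φv i)^2 with hSφd
  set b : ℕ → ℝ := fun i => av i * (vv i - vv (i-1)) / h with hb
  have hSXnn : 0 ≤ SX := Finset.sum_nonneg fun i _ => by positivity
  have hstep1 : ∑ i ∈ Finset.Icc 1 (N-1), h * (vv i * g i)
      = ∑ i ∈ Finset.Icc 1 (N-1), vv i * (b (i+1) - b i)
        - ∑ i ∈ Finset.Icc 1 (N-1), h * (dv i * (vv i)^2)
        + ∑ i ∈ Finset.Icc 1 (N-1), h * (vv i * φv i) := by
    rw [← Finset.sum_sub_distrib, ← Finset.sum_add_distrib]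
    refine Finset.sum_congr rfl fun i hi => ?_
    obtain ⟨h1, h2⟩ := Finset.mem_Icc.mp hi
    rw [hg i h1 h2]
    simp only [hb]
    have e : i + 1 - 1 = i := by omega
    rw [e]
    field_simp
  have hsbp := sbp N (by omega) vv b hv0 hvN
  have hbΔ : c₁ * SX ≤ ∑ i ∈ Finset.Icc 1 N, b i * (vv i - vv (i-1)) := by
    rw [hSXd, Finset.mul_sum]
    refine Finset.sum_le_sum fun i hi => ?_
    obtain ⟨h1, h2⟩ := Finset.mem_Icc.mp hi
    have haI := ha i h1 h2
    have e : b i * (vv i - vv (i-1)) = av i * (h * ((vv i - vv (i-1))/h)^2) := by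
      simp only [hb]; field_simp
    rw [e]
    have hq : 0 ≤ h * ((vv i - vv (i-1))/h)^2 := by positivity
    exact mul_le_mul_of_nonneg_right haI hq
  have hdterm : 0 ≤ ∑ i ∈ Finset.Icc 1 (N-1), h * (dv i * (vv i)^2) := by
    refine Finset.sum_nonneg fun i hi => ?_
    obtain ⟨h1, h2⟩ := Finset.mem_Icc.mp hi
    exact mul_nonneg hh.le (mul_nonneg (hd i h1 h2) (sq_nonneg _))
  have hfried := friedrichs N (by omega) h hh vv hv0
  have hφb : 2 * ∑ i ∈ Finset.Icc 1 (N-1), h * (vv i * φv i) ≤ c₁ * SX + l^2/(2*c₁) * Sφ := by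
    have hε : (0:ℝ) < 2*c₁/l^2 := by positivity
    have hεinv : (2*c₁/l^2) * (l^2/(2*c₁)) = 1 := by field_simp
    have hpoint : ∀ i ∈ Finset.Icc 1 (N-1), 2 * (h * (vv i * φv i))
        ≤ (2*c₁/l^2) * (h * (vv i)^2) + l^2/(2*c₁) * (h * (φv i)^2) := by
      intro i _
      have hsq := sq_nonneg ((2*c₁/l^2) * vv i - φv i)
      have h2 : 2 * (vv i * φv i) ≤ (2*c₁/l^2) * (vv i)^2 + l^2/(2*c₁) * (φv i)^2 := by
        nlinarith [hsq, hε, hεinv, sq_nonneg (vv i), sq_nonneg (φv i)]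
      nlinarith [h2, hh.le]
    calc 2 * ∑ i ∈ Finset.Icc 1 (N-1), h * (vv i * φv i)
        = ∑ i ∈ Finset.Icc 1 (N-1), 2 * (h * (vv i * φv i)) := by rw [Finset.mul_sum]
      _ ≤ ∑ i ∈ Finset.Icc 1 (N-1), ((2*c₁/l^2) * (h * (vv i)^2) + l^2/(2*c₁) * (h * (φv i)^2)) :=
          Finset.sum_le_sum hpoint
      _ = (2*c₁/l^2) * ∑ i ∈ Finset.Icc 1 (N-1), h * (vv i)^2 + l^2/(2*c₁) * Sφ := by
          rw [Finset.sum_add_distrib, hSφd, Finset.mul_sum, Finset.mul_sum]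
      _ ≤ (2*c₁/l^2) * (((N:ℝ)*h)^2/2 * SX) + l^2/(2*c₁) * Sφ := by
          have := mul_le_mul_of_nonneg_left hfried hε.le
          rw [← hSXd] at this
          linarith [this]
      _ = c₁ * SX + l^2/(2*c₁) * Sφ := by
          rw [hlh]
          field_simp
  have hone : ∑ i ∈ Finset.Icc 1 (N-1), h * (vv i * g i)
      ≤ -(c₁ * SX) - ∑ i ∈ Finset.Icc 1 (N-1), h * (dv i * (vv i)^2)
        + ∑ i ∈ Finset.Icc 1 (N-1), h * (vv i * φv i) := by
    rw [hstep1, hsbp]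
    linarith [hbΔ]
  calc 2*τ*∑ i ∈ Finset.Icc 1 (N-1), h * (vv i * g i)
      ≤ 2*τ*(-(c₁ * SX) + ∑ i ∈ Finset.Icc 1 (N-1), h * (vv i * φv i)) := by
        refine mul_le_mul_of_nonneg_left ?_ (by positivity)
        linarith [hone, hdterm]
    _ = -(2*τ*(c₁*SX)) + τ * (2 * ∑ i ∈ Finset.Icc 1 (N-1), h * (vv i * φv i)) := by ring
    _ ≤ -(2*τ*(c₁*SX)) + τ * (c₁ * SX + l^2/(2*c₁) * Sφ) := by
        have := mul_le_mul_of_nonneg_left hφb hτ.le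
        linarith [this]
    _ = -(τ * c₁ * SX) + τ * (l^2/(2*c₁)) * Sφ := by ring


private noncomputable def ccf (αi τ : ℝ) (k : ℕ) : ℝ :=
  (((k + 1 : ℕ) : ℝ) * τ) ^ (1 - αi) - (((k : ℕ) : ℝ) * τ) ^ (1 - αi)

private lemma ccf_nonneg (αi τ : ℝ) (hτ : 0 < τ) (hα1 : αi ≤ 1) (k : ℕ) :
    0 ≤ ccf αi τ k := by
  have h1 : ((k : ℕ) : ℝ) * τ ≤ ((k + 1 : ℕ) : ℝ) * τ := by
    have : ((k : ℕ) : ℝ) ≤ ((k + 1 : ℕ) : ℝ) := by push_cast; linarith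
    nlinarith [hτ.le]
  exact sub_nonneg.mpr (Real.rpow_le_rpow (by positivity) h1 (by linarith))

private lemma ccf_anti (αi τ : ℝ) (hτ : 0 < τ) (h0 : 0 ≤ 1 - αi) (h1 : 1 - αi ≤ 1) (k : ℕ) :
    ccf αi τ (k+1) ≤ ccf αi τ k := by
  have hconc := Real.concaveOn_rpow h0 h1
  have hx0 : ((k:ℝ)*τ) ∈ Set.Ici (0:ℝ) := Set.mem_Ici.mpr (by positivity)
  have hx2 : (((k:ℝ)+2)*τ) ∈ Set.Ici (0:ℝ) := Set.mem_Ici.mpr (by positivity)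
  have hmid := hconc.2 hx0 hx2 (by norm_num : (0:ℝ) ≤ 1/2) (by norm_num : (0:ℝ) ≤ 1/2)
    (by norm_num)
  simp only [smul_eq_mul] at hmid
  have e : (1/2:ℝ) * ((k:ℝ)*τ) + (1/2:ℝ) * (((k:ℝ)+2)*τ) = ((k:ℝ)+1)*τ := by ring
  rw [e] at hmid
  simp only [ccf]
  push_cast
  have e2 : ((k:ℝ)+1+1) = (k:ℝ)+2 := by ring
  rw [e2]
  linarith [hmid]

private lemma ccf_sum (αi τ : ℝ) (hτ : 0 < τ) (hβ : (1:ℝ) - αi ≠ 0) (n : ℕ) :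
    ∑ k ∈ Finset.range n, ccf αi τ k = ((n : ℝ) * τ) ^ (1 - αi) := by
  have := Finset.sum_range_sub (fun k : ℕ => (((k : ℕ) : ℝ) * τ) ^ (1 - αi)) n
  simp only [ccf]
  rw [this]
  norm_num [Real.zero_rpow hβ]

private lemma sigma_quad (σ x xm : ℝ) (hx1 : 1 ≤ x) (hxm : x ≤ xm) (hxm2 : xm < 2)
    (hσm : 1 ≤ σ * (3 - xm)) (hσ2 : σ ≤ 1) : (x - 1) * σ^2 ≤ 2*σ - 1 := by
  have hσ0 : 0 < σ := by nlinarith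
  have h1' : 1 ≤ σ * (3 - x) := by nlinarith
  have h2σ : 1 ≤ 2 * σ := by nlinarith
  nlinarith [mul_nonneg (sub_nonneg.2 hσ2) (sub_nonneg.2 h1'),
    mul_nonneg (mul_nonneg (by linarith : (0:ℝ) ≤ 2 - x) hσ0.le) (by linarith : (0:ℝ) ≤ 2*σ - 1)]

private lemma ccf_q (σ αi τ : ℝ) (hτ : 0 < τ) (hα0 : 0 < αi) (hα1 : αi < 1)
    (hq : ((2:ℝ) ^ ((1:ℝ) - αi) - 1) * σ^2 ≤ 2*σ - 1) :
    σ^2 * ccf αi τ 1 ≤ (2*σ - 1) * ccf αi τ 0 := by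
  have hc0 : ccf αi τ 0 = τ ^ (1 - αi) := by
    simp only [ccf]
    norm_num [Real.zero_rpow (show (1:ℝ) - αi ≠ 0 by linarith)]
  have hc1 : ccf αi τ 1 = ((2:ℝ) ^ ((1:ℝ) - αi) - 1) * τ ^ (1 - αi) := by
    simp only [ccf]
    norm_num
    rw [show ((2:ℝ))*τ = 2*τ by ring, Real.mul_rpow (by norm_num) hτ.le]
    ring
  rw [hc0, hc1]
  have hτβ : 0 < τ ^ ((1:ℝ) - αi) := Real.rpow_pos_of_pos hτ _
  nlinarith [hq, hτβ]

/-- Theorem 3: a priori estimate (27) for the weighted difference scheme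
(19)–(21) for the Dirichlet problem, valid for
`σ ≥ 1/(3 − 2^{1−min_i α_i})`.  Here `y i j ≈ u(x_i, t_j)`, `h = l/N`,
`τ = T/j₀`, and `a i j`, `d i j`, `φ i j` are the coefficients of the
difference operator `Λ` and the right-hand side at the time level `t_{j+1/2}`. -/
theorem dirichlet_scheme_apriori_estimate
    (l T c₁ σ : ℝ) (N j₀ : ℕ) (hN : 2 ≤ N) (hj₀ : 0 < j₀)
    (hl : 0 < l) (hT : 0 < T) (hc₁ : 0 < c₁)
    (h τ : ℝ) (hh : h = l / N) (hτ : τ = T / j₀)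
    (α : ℕ → ℝ) (hα : ∀ i ≤ N, 0 < α i ∧ α i < 1)
    (a d φ : ℕ → ℕ → ℝ)
    (ha : ∀ j < j₀, ∀ i, 1 ≤ i → i ≤ N → c₁ ≤ a i j)
    (hd : ∀ j < j₀, ∀ i, 1 ≤ i → i ≤ N - 1 → 0 ≤ d i j)
    (hσ1 : 1 / (3 - (2:ℝ) ^ ((1:ℝ) -
      (Finset.range (N + 1)).inf' (Finset.nonempty_range_iff.mpr (Nat.succ_ne_zero N)) α)) ≤ σ)
    (hσ2 : σ ≤ 1)
    (y : ℕ → ℕ → ℝ) (u₀ : ℝ → ℝ)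
    -- the difference scheme (19):
    (hscheme : ∀ j < j₀, ∀ i, 1 ≤ i → i ≤ N - 1 →
      dCaputo (α i) τ (fun s => y i s) j =
        ((a (i + 1) j * ((σ * y (i + 1) (j + 1) + (1 - σ) * y (i + 1) j) -
            (σ * y i (j + 1) + (1 - σ) * y i j)) / h -
          a i j * ((σ * y i (j + 1) + (1 - σ) * y i j) -
            (σ * y (i - 1) (j + 1) + (1 - σ) * y (i - 1) j)) / h) / h -
          d i j * (σ * y i (j + 1) + (1 - σ) * y i j)) + φ i j)
    -- boundary conditions (20):
    (hbc : ∀ j ≤ j₀, y 0 j = 0 ∧ y N j = 0)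
    -- initial condition (21):
    (hic : ∀ i ≤ N, y i 0 = u₀ (i * h)) :
    ∀ j < j₀,
      (∑ i ∈ Finset.Icc 1 (N - 1), h * ((1 / Real.Gamma (2 - α i)) *
        ∑ j' ∈ Finset.range (j + 1),
          (((((j : ℕ) - j' + 1 : ℕ) : ℝ) * τ) ^ (1 - α i) -
            ((((j : ℕ) - j' : ℕ) : ℝ) * τ) ^ (1 - α i)) * (y i (j' + 1)) ^ 2)) +
      c₁ * ∑ j' ∈ Finset.range (j + 1),
        (∑ i ∈ Finset.Icc 1 N, h *
          (((σ * y i (j' + 1) + (1 - σ) * y i j') -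
            (σ * y (i - 1) (j' + 1) + (1 - σ) * y (i - 1) j')) / h) ^ 2) * τ ≤
      l ^ 2 / (2 * c₁) * ∑ j' ∈ Finset.range (j + 1),
        (∑ i ∈ Finset.Icc 1 (N - 1), h * (φ i j') ^ 2) * τ +
      ∑ i ∈ Finset.Icc 1 (N - 1), h *
        ((((j + 1 : ℕ) : ℝ) * τ) ^ (1 - α i) / Real.Gamma (2 - α i)) *
          (u₀ (i * h)) ^ 2 := by
  
  intro j hj
  -- basic positivity
  have hNpos : 0 < N := by omega
  have hNR : (0:ℝ) < (N:ℝ) := by exact_mod_cast hNpos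
  have hτpos : 0 < τ := by rw [hτ]; exact div_pos hT (by exact_mod_cast hj₀)
  have hhpos : 0 < h := by rw [hh]; exact div_pos hl hNR
  have hlh : (N:ℝ) * h = l := by rw [hh]; field_simp
  have hγpos : ∀ i ≤ N, 0 < Real.Gamma (2 - α i) := fun i hi =>
    Real.Gamma_pos_of_pos (by linarith [(hα i hi).2])
  -- the σ-condition for every node
  have hσq : ∀ i ≤ N, σ^2 * ccf (α i) τ 1 ≤ (2*σ - 1) * ccf (α i) τ 0 := by
    intro i hiN
    obtain ⟨hαi0, hαi1⟩ := hα i hiN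
    set αm := (Finset.range (N + 1)).inf'
      (Finset.nonempty_range_iff.mpr (Nat.succ_ne_zero N)) α with hαmd
    obtain ⟨i₀, hi₀, hi₀eq⟩ := Finset.exists_mem_eq_inf'
      (Finset.nonempty_range_iff.mpr (Nat.succ_ne_zero N)) α
    have hi₀N : i₀ ≤ N := by have := Finset.mem_range.mp hi₀; omega
    have hαm0 : 0 < αm := by rw [hαmd, hi₀eq]; exact (hα i₀ hi₀N).1
    have hαm1 : αm < 1 := by rw [hαmd, hi₀eq]; exact (hα i₀ hi₀N).2
    have hαmle : αm ≤ α i := Finset.inf'_le α (Finset.mem_range.mpr (by omega))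
    have hx1 : (1:ℝ) ≤ (2:ℝ) ^ ((1:ℝ) - α i) := by
      rw [show (1:ℝ) = (2:ℝ) ^ (0:ℝ) by norm_num]
      exact Real.rpow_le_rpow_of_exponent_le (by norm_num) (by linarith)
    have hxm : (2:ℝ) ^ ((1:ℝ) - α i) ≤ (2:ℝ) ^ ((1:ℝ) - αm) :=
      Real.rpow_le_rpow_of_exponent_le (by norm_num) (by linarith)
    have hxm2 : (2:ℝ) ^ ((1:ℝ) - αm) < 2 := by
      have := Real.rpow_lt_rpow_of_exponent_lt (show (1:ℝ) < 2 by norm_num)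
        (show (1:ℝ) - αm < 1 by linarith)
      rwa [Real.rpow_one] at this
    have hden : (0:ℝ) < 3 - (2:ℝ) ^ ((1:ℝ) - αm) := by linarith
    have hσm : 1 ≤ σ * (3 - (2:ℝ) ^ ((1:ℝ) - αm)) := by
      rw [div_le_iff₀ hden] at hσ1
      linarith
    exact ccf_q σ (α i) τ hτpos hαi0 hαi1
      (sigma_quad σ _ _ hx1 hxm hxm2 hσm hσ2)
  -- the per-time-level estimate
  have hlev : ∀ j' < j₀,
      (∑ i ∈ Finset.Icc 1 (N-1), h / Real.Gamma (2 - α i) *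
        ∑ s ∈ Finset.range (j'+1), ccf (α i) τ (j'-s) * ((y i (s+1))^2 - (y i s)^2))
      + τ * c₁ * (∑ i ∈ Finset.Icc 1 N, h *
          (((σ * y i (j'+1) + (1-σ) * y i j') -
            (σ * y (i-1) (j'+1) + (1-σ) * y (i-1) j'))/h)^2)
      ≤ τ * (l^2/(2*c₁)) * ∑ i ∈ Finset.Icc 1 (N-1), h * (φ i j')^2 := by
    intro j' hj'
    -- per-node Caputo lower bound
    have hcap : ∀ i ∈ Finset.Icc 1 (N-1),
        h / Real.Gamma (2 - α i) *
          ∑ s ∈ Finset.range (j'+1), ccf (α i) τ (j'-s) * ((y i (s+1))^2 - (y i s)^2)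
        ≤ 2*τ*(h * ((σ * y i (j'+1) + (1-σ) * y i j') *
            dCaputo (α i) τ (fun s => y i s) j')) := by
      intro i hi
      obtain ⟨h1i, h2i⟩ := Finset.mem_Icc.mp hi
      have hiN : i ≤ N := by omega
      obtain ⟨hαi0, hαi1⟩ := hα i hiN
      have hγ : 0 < Real.Gamma (2 - α i) := hγpos i hiN
      have hki := key_ineq (ccf (α i) τ) (fun k => ccf_nonneg (α i) τ hτpos hαi1.le k)
        (fun k => ccf_anti (α i) τ hτpos (by linarith) (by linarith) k)
        σ (hσq i hiN) (fun s => y i s) j'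
      try simp only [] at hki
      have hmul := mul_le_mul_of_nonneg_left hki
        (show (0:ℝ) ≤ 2*h/Real.Gamma (2 - α i) by positivity)
      have e1 : ∑ s ∈ Finset.range (j'+1),
          ccf (α i) τ (j'-s) * ((y i (s+1) - y i s) * (σ * y i (j'+1) + (1-σ) * y i j'))
          = (∑ s ∈ Finset.range (j'+1), ccf (α i) τ (j'-s) * (y i (s+1) - y i s))
              * (σ * y i (j'+1) + (1-σ) * y i j') := by
        rw [Finset.sum_mul]
        exact Finset.sum_congr rfl fun s _ => by ring
      have e2 : dCaputo (α i) τ (fun s => y i s) j'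
          = (1/Real.Gamma (2 - α i)) *
            ((∑ s ∈ Finset.range (j'+1), ccf (α i) τ (j'-s) * (y i (s+1) - y i s)) / τ) := by
        simp only [dCaputo, ccf]
        rw [Finset.sum_div]
      calc h / Real.Gamma (2 - α i) *
            ∑ s ∈ Finset.range (j'+1), ccf (α i) τ (j'-s) * ((y i (s+1))^2 - (y i s)^2)
          = (2*h/Real.Gamma (2 - α i)) * ((1/2) *
            ∑ s ∈ Finset.range (j'+1), ccf (α i) τ (j'-s) * ((y i (s+1))^2 - (y i s)^2)) := by
            field_simp
        _ ≤ (2*h/Real.Gamma (2 - α i)) *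
            ∑ s ∈ Finset.range (j'+1),
              ccf (α i) τ (j'-s) * ((y i (s+1) - y i s) * (σ * y i (j'+1) + (1-σ) * y i j')) :=
            hmul
        _ = 2*τ*(h * ((σ * y i (j'+1) + (1-σ) * y i j') *
              dCaputo (α i) τ (fun s => y i s) j')) := by
            rw [e1, e2]
            field_simp
    -- apply the spatial estimate
    have hlevE := levelE N hN h c₁ l τ hhpos hc₁ hl hτpos hlh
      (fun i => a i j') (fun i => d i j') (fun i => φ i j')
      (fun i => σ * y i (j'+1) + (1-σ) * y i j')
      (fun i => dCaputo (α i) τ (fun s => y i s) j')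
      (fun i h1 h2 => ha j' hj' i h1 h2)
      (fun i h1 h2 => hd j' hj' i h1 h2)
      (by simp [(hbc j' hj'.le).1, (hbc (j'+1) (by omega)).1])
      (by simp [(hbc j' hj'.le).2, (hbc (j'+1) (by omega)).2])
      (fun i h1 h2 => hscheme j' hj' i h1 h2)
    try simp only [] at hlevE
    have hchain : ∑ i ∈ Finset.Icc 1 (N-1), h / Real.Gamma (2 - α i) *
          ∑ s ∈ Finset.range (j'+1), ccf (α i) τ (j'-s) * ((y i (s+1))^2 - (y i s)^2)
        ≤ 2*τ*∑ i ∈ Finset.Icc 1 (N-1), h * ((σ * y i (j'+1) + (1-σ) * y i j') *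
            dCaputo (α i) τ (fun s => y i s) j') := by
      rw [Finset.mul_sum]
      exact Finset.sum_le_sum hcap
    linarith [hchain, hlevE]
  -- sum the level estimates over j' = 0..j
  have hsum := Finset.sum_le_sum (fun j' (hj' : j' ∈ Finset.range (j+1)) =>
    hlev j' (by have := Finset.mem_range.mp hj'; omega))
  rw [Finset.sum_add_distrib] at hsum
  -- telescope the Caputo part
  have hswap : ∑ j' ∈ Finset.range (j+1), ∑ i ∈ Finset.Icc 1 (N-1),
        h / Real.Gamma (2 - α i) *
          ∑ s ∈ Finset.range (j'+1), ccf (α i) τ (j'-s) * ((y i (s+1))^2 - (y i s)^2)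
      = ∑ i ∈ Finset.Icc 1 (N-1), (h / Real.Gamma (2 - α i) *
          (∑ s ∈ Finset.range (j+1), ccf (α i) τ (j-s) * (y i (s+1))^2)
        - h / Real.Gamma (2 - α i) *
          ((((j + 1 : ℕ) : ℝ) * τ) ^ (1 - α i) * (u₀ (i * h))^2)) := by
    rw [Finset.sum_comm]
    refine Finset.sum_congr rfl fun i hi => ?_
    obtain ⟨h1i, h2i⟩ := Finset.mem_Icc.mp hi
    have hiN : i ≤ N := by omega
    obtain ⟨hαi0, hαi1⟩ := hα i hiN
    rw [← Finset.mul_sum]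
    have ht2 := telescope2 (ccf (α i) τ) (fun s => (y i s)^2) j
    try simp only [] at ht2
    rw [ht2, ccf_sum (α i) τ hτpos (by linarith) (j+1), hic i hiN]
    push_cast
    ring
  -- rewrite the goal in matching form
  have hgoal1 : ∑ i ∈ Finset.Icc 1 (N - 1), h * ((1 / Real.Gamma (2 - α i)) *
        ∑ j' ∈ Finset.range (j + 1),
          (((((j : ℕ) - j' + 1 : ℕ) : ℝ) * τ) ^ (1 - α i) -
            ((((j : ℕ) - j' : ℕ) : ℝ) * τ) ^ (1 - α i)) * (y i (j' + 1)) ^ 2)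
      = ∑ i ∈ Finset.Icc 1 (N-1), h / Real.Gamma (2 - α i) *
          (∑ s ∈ Finset.range (j+1), ccf (α i) τ (j-s) * (y i (s+1))^2) := by
    refine Finset.sum_congr rfl fun i _ => ?_
    simp only [ccf]
    ring
  have hgoal2 : c₁ * ∑ j' ∈ Finset.range (j + 1),
        (∑ i ∈ Finset.Icc 1 N, h *
          (((σ * y i (j' + 1) + (1 - σ) * y i j') -
            (σ * y (i - 1) (j' + 1) + (1 - σ) * y (i - 1) j')) / h) ^ 2) * τ
      = ∑ j' ∈ Finset.range (j+1), τ * c₁ * (∑ i ∈ Finset.Icc 1 N, h *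
          (((σ * y i (j'+1) + (1-σ) * y i j') -
            (σ * y (i-1) (j'+1) + (1-σ) * y (i-1) j'))/h)^2) := by
    rw [Finset.mul_sum]
    exact Finset.sum_congr rfl fun j' _ => by ring
  have hgoal3 : l ^ 2 / (2 * c₁) * ∑ j' ∈ Finset.range (j + 1),
        (∑ i ∈ Finset.Icc 1 (N - 1), h * (φ i j') ^ 2) * τ
      = ∑ j' ∈ Finset.range (j+1),
          τ * (l^2/(2*c₁)) * ∑ i ∈ Finset.Icc 1 (N-1), h * (φ i j')^2 := by
    rw [Finset.mul_sum]
    exact Finset.sum_congr rfl fun j' _ => by ring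
  have hgoal4 : ∑ i ∈ Finset.Icc 1 (N - 1), h *
        ((((j + 1 : ℕ) : ℝ) * τ) ^ (1 - α i) / Real.Gamma (2 - α i)) * (u₀ (i * h)) ^ 2
      = ∑ i ∈ Finset.Icc 1 (N-1), h / Real.Gamma (2 - α i) *
          ((((j + 1 : ℕ) : ℝ) * τ) ^ (1 - α i) * (u₀ (i * h))^2) := by
    exact Finset.sum_congr rfl fun i _ => by ring
  rw [hswap, Finset.sum_sub_distrib] at hsum
  rw [hgoal1, hgoal2, hgoal3, hgoal4]
  linarith [hsum]
end

section
/- Let l, T > 0, N, j₀ ∈ ℕ with N ≥ 2, h = l/N, τ = T/j₀, grid points x_i = ih and t_j = jτ. Let 0 < α < 1 be constant, let c₁ > 0, and for each time level j let coefficients a_i^{j+1/2} (1 ≤ i ≤ N) satisfy a_i^{j+1/2} ≥ c₁, d_i^{j+1/2} ≥ 0 (1 ≤ i ≤ N−1), and let φ_i^{j+1/2} be given (1 ≤ i ≤ N−1). Suppose 1/(3 − 2^{1−α}) ≤ σ ≤ 1 and y_i^j solves Δ_{0t_j}^{α} y_i = (Λ(σ y^{j+1} + (1−σ)y^j))_i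 + φ_i^{j+1/2} for 1 ≤ i ≤ N−1 and 0 ≤ j ≤ j₀−1, with y_0^j = y_N^j = 0 and y_i^0 = u₀(x_i). Then for every 0 ≤ j ≤ j₀−1: (1/Γ(2−α)) Σ_{j'=0}^{j} (t_{j−j'+1}^{1−α} − t_{j−j'}^{1−α}) ‖y^{j'+1}‖₀² + c₁ Σ_{j'=0}^{j} ‖σ y_x̄^{j'+1} + (1−σ) y_x̄^{j'}‖₀'² · τ ≤ (l²/(2c₁)) Σ_{j'=0}^{j} ‖φ^{j'}‖₀² · τ + (t_{j+1}^{1−α}/Γ(2−α)) ‖u₀‖₀². -/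
open Finset

lemma my_abel_sum (b D : ℕ → ℝ) (n : ℕ) :
    ∑ s ∈ range (n+1), b s * (D s - D (s+1)) =
      b 0 * D 0 - b n * D (n+1) + ∑ s ∈ range n, (b (s+1) - b s) * D (s+1) := by
  induction n with
  | zero => simp [mul_sub]
  | succ m ih => rw [sum_range_succ, ih, sum_range_succ]; ring

/-- Pointwise Caputo energy inequality (Alikhanov). -/
lemma my_caputo_quad (b z : ℕ → ℝ) (σ : ℝ) (j : ℕ)
    (hb0 : 0 ≤ b 0) (hmono : ∀ s < j, b s ≤ b (s+1))
    (hσ : 1/2 ≤ σ)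
    (hlast : 1 ≤ j → σ^2 * b (j-1) ≤ (2*σ-1) * b j) :
    (1/2) * ∑ s ∈ range (j+1), b s * ((z (s+1))^2 - (z s)^2)
      ≤ ∑ s ∈ range (j+1), b s * (z (s+1) - z s) * (σ * z (j+1) + (1-σ) * z j) := by
  obtain ⟨δ, hδ⟩ : ∃ δ : ℝ, δ = z (j+1) - z j := ⟨_, rfl⟩
  obtain ⟨D, hDf⟩ : ∃ D : ℕ → ℝ, D = fun s => z j - z s := ⟨_, rfl⟩
  have hD : ∀ s, D s = z j - z s := fun s => by rw [hDf]
  have hDj : D j = 0 := by rw [hD]; ring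
  have hDj1 : D (j+1) = -δ := by rw [hD, hδ]; ring
  have key : ∑ s ∈ range (j+1), b s * (z (s+1) - z s) * (σ * z (j+1) + (1-σ) * z j)
      - (1/2) * ∑ s ∈ range (j+1), b s * ((z (s+1))^2 - (z s)^2)
      = σ * δ * (∑ s ∈ range (j+1), b s * (D s - D (s+1)))
        + (1/2) * (∑ s ∈ range (j+1), b s * ((D s)^2 - (D (s+1))^2)) := by
    rw [Finset.mul_sum, Finset.mul_sum, Finset.mul_sum, ← Finset.sum_sub_distrib,
      ← Finset.sum_add_distrib]
    refine Finset.sum_congr rfl fun s _ => ?_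
    rw [hD s, hD (s+1), hδ]
    ring
  have abel2 := my_abel_sum b (fun s => (D s)^2) j
  rw [my_abel_sum b D j, abel2, hDj1] at key
  cases j with
  | zero =>
      rw [hDj] at key
      simp only [range_zero, sum_empty] at key
      nlinarith [key, mul_nonneg (by linarith : (0:ℝ) ≤ σ - 1/2) (mul_nonneg hb0 (sq_nonneg δ))]
  | succ m =>
      have hP : ∑ s ∈ range (m+1), (b (s+1) - b s) * D (s+1)
          = (∑ s ∈ range m, (b (s+1) - b s) * D (s+1)) + (b (m+1) - b m) * D (m+1) :=
        sum_range_succ _ m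
      have hQ : ∑ s ∈ range (m+1), (b (s+1) - b s) * (D (s+1))^2
          = (∑ s ∈ range m, (b (s+1) - b s) * (D (s+1))^2) + (b (m+1) - b m) * (D (m+1))^2 :=
        sum_range_succ _ m
      rw [hP, hQ, hDj] at key
      have hq : ∀ s ∈ range m, (b (s+1) - b s) * (-(σ^2*δ^2/2))
          ≤ σ*δ*((b (s+1) - b s)*D (s+1)) + (1/2)*((b (s+1) - b s)*(D (s+1))^2) := by
        intro s hs
        have hs' : s < m := mem_range.1 hs
        have hqs : 0 ≤ b (s+1) - b s := sub_nonneg.2 (hmono s (by omega))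
        nlinarith [mul_nonneg hqs (sq_nonneg (D (s+1) + σ*δ))]
      have hsum := Finset.sum_le_sum hq
      rw [← Finset.sum_mul, Finset.sum_range_sub b m] at hsum
      have hsplit : ∑ s ∈ range m, (σ*δ*((b (s+1) - b s)*D (s+1))
            + (1/2)*((b (s+1) - b s)*(D (s+1))^2))
          = σ*δ*(∑ s ∈ range m, (b (s+1) - b s)*D (s+1))
            + (1/2)*(∑ s ∈ range m, (b (s+1) - b s)*(D (s+1))^2) := by
        rw [Finset.sum_add_distrib, Finset.mul_sum, Finset.mul_sum]
      rw [hsplit] at hsum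
      have h0 : b 0 * (-(σ^2*δ^2/2)) ≤ σ*δ*(b 0*D 0) + (1/2)*(b 0*(D 0)^2) := by
        nlinarith [mul_nonneg hb0 (sq_nonneg (D 0 + σ*δ))]
      have hlastm := hlast (by omega)
      simp only [Nat.add_sub_cancel] at hlastm
      have final : σ^2*b m*δ^2 ≤ (2*σ-1)*b (m+1)*δ^2 := by
        have := mul_le_mul_of_nonneg_right hlastm (sq_nonneg δ)
        linarith
      linarith [key, hsum, h0, final]

/-- Summation by parts for the spatial operator. -/
lemma my_sbp (v A : ℕ → ℝ) (M : ℕ) :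
    ∑ k ∈ range M, v (k+1) * (A (k+1) - A k)
      + ∑ k ∈ range (M+1), (v (k+1) - v k) * A k
      = v (M+1) * A M - v 0 * A 0 := by
  induction M with
  | zero => simp [sum_range_succ]; ring
  | succ m ih =>
      rw [sum_range_succ, sum_range_succ _ (m+1)]
      linear_combination ih

/-- Gauss sum. -/
lemma my_gauss (M : ℕ) : ∑ k ∈ range M, ((k:ℝ)+1) = M*(M+1)/2 := by
  induction M with
  | zero => simp
  | succ m ih => rw [sum_range_succ, ih]; push_cast; ring

lemma my_Icc_sum (M : ℕ) (f : ℕ → ℝ) :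
    ∑ i ∈ Finset.Icc 1 M, f i = ∑ k ∈ range M, f (k+1) := by
  rw [← Finset.Ico_add_one_right_eq_Icc, Finset.sum_Ico_eq_sum_range]
  simp [add_comm]

/-- Time telescoping identity for summed discrete Caputo derivatives. -/
lemma my_time_identity (w g : ℕ → ℝ) (m : ℕ) :
    ∑ j' ∈ range (m+1), (∑ s ∈ range (j'+1), w (j' - s) * (g (s+1) - g s))
      = (∑ s ∈ range (m+1), w (m - s) * g (s+1)) - (∑ j' ∈ range (m+1), w j') * g 0 := by
  induction m with
  | zero => simp; ring
  | succ n ih =>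
      rw [sum_range_succ, ih]
      have split : ∑ s ∈ range (n+2), w (n+1-s) * g s
          = (∑ s ∈ range (n+1), w (n-s) * g (s+1)) + w (n+1) * g 0 := by
        rw [Finset.sum_range_succ' (fun s => w (n+1-s) * g s) (n+1)]
        simp [Nat.succ_sub_succ]
      have inner : ∑ s ∈ range (n+2), w (n+1-s) * (g (s+1) - g s)
          = (∑ s ∈ range (n+2), w (n+1-s) * g (s+1))
            - ((∑ s ∈ range (n+1), w (n-s) * g (s+1)) + w (n+1) * g 0) := by
        rw [← split, ← Finset.sum_sub_distrib]
        exact Finset.sum_congr rfl fun s _ => by ring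
      have hW : ∑ j' ∈ range (n+1+1), w j' = (∑ j' ∈ range (n+1), w j') + w (n+1) :=
        sum_range_succ w (n+1)
      rw [inner, hW]
      ring



set_option maxHeartbeats 2000000 in
/-- A priori estimate (31) for the weighted difference scheme (19)–(21) for the
Dirichlet problem with constant fractional order `α`, valid for
`1/(3 − 2^{1−α}) ≤ σ ≤ 1`.  Here `y i j ≈ u(x_i, t_j)`, `h = l/N`, `τ = T/j₀`. -/
theorem dirichlet_scheme_apriori_estimate_const_order
    (l T c₁ σ : ℝ) (N j₀ : ℕ) (hN : 2 ≤ N) (hj₀ : 0 < j₀)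
    (hl : 0 < l) (hT : 0 < T) (hc₁ : 0 < c₁)
    (h τ : ℝ) (hh : h = l / N) (hτ : τ = T / j₀)
    (α : ℝ) (hα0 : 0 < α) (hα1 : α < 1)
    (a d φ : ℕ → ℕ → ℝ)
    (ha : ∀ j < j₀, ∀ i, 1 ≤ i → i ≤ N → c₁ ≤ a i j)
    (hd : ∀ j < j₀, ∀ i, 1 ≤ i → i ≤ N - 1 → 0 ≤ d i j)
    (hσ1 : 1 / (3 - (2:ℝ) ^ ((1:ℝ) - α)) ≤ σ) (hσ2 : σ ≤ 1)
    (y : ℕ → ℕ → ℝ) (u₀ : ℝ → ℝ)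
    -- the difference scheme (19):
    (hscheme : ∀ j < j₀, ∀ i, 1 ≤ i → i ≤ N - 1 →
      dCaputo α τ (fun s => y i s) j =
        ((a (i + 1) j * ((σ * y (i + 1) (j + 1) + (1 - σ) * y (i + 1) j) -
            (σ * y i (j + 1) + (1 - σ) * y i j)) / h -
          a i j * ((σ * y i (j + 1) + (1 - σ) * y i j) -
            (σ * y (i - 1) (j + 1) + (1 - σ) * y (i - 1) j)) / h) / h -
          d i j * (σ * y i (j + 1) + (1 - σ) * y i j)) + φ i j)
    -- boundary conditions (20):
    (hbc : ∀ j ≤ j₀, y 0 j = 0 ∧ y N j = 0)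
    -- initial condition (21):
    (hic : ∀ i ≤ N, y i 0 = u₀ (i * h)) :
    ∀ j < j₀,
      (1 / Real.Gamma (2 - α)) * (∑ j' ∈ Finset.range (j + 1),
        (((((j : ℕ) - j' + 1 : ℕ) : ℝ) * τ) ^ (1 - α) -
          ((((j : ℕ) - j' : ℕ) : ℝ) * τ) ^ (1 - α)) *
          (∑ i ∈ Finset.Icc 1 (N - 1), h * (y i (j' + 1)) ^ 2)) +
      c₁ * ∑ j' ∈ Finset.range (j + 1),
        (∑ i ∈ Finset.Icc 1 N, h *
          (((σ * y i (j' + 1) + (1 - σ) * y i j') -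
            (σ * y (i - 1) (j' + 1) + (1 - σ) * y (i - 1) j')) / h) ^ 2) * τ ≤
      l ^ 2 / (2 * c₁) * ∑ j' ∈ Finset.range (j + 1),
        (∑ i ∈ Finset.Icc 1 (N - 1), h * (φ i j') ^ 2) * τ +
      ((((j + 1 : ℕ) : ℝ) * τ) ^ (1 - α) / Real.Gamma (2 - α)) *
        (∑ i ∈ Finset.Icc 1 (N - 1), h * (u₀ (i * h)) ^ 2) := by
  intro j hj
  have hN0 : 0 < (N:ℝ) := by exact_mod_cast Nat.lt_of_lt_of_le two_pos hN
  have hh0 : 0 < h := by rw [hh]; positivity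
  have hj₀0 : 0 < (j₀:ℝ) := by exact_mod_cast hj₀
  have hτ0 : 0 < τ := by rw [hτ]; positivity
  have hp0 : 0 < 1 - α := by linarith
  have hG : 0 < Real.Gamma (2-α) := Real.Gamma_pos_of_pos (by linarith)
  have hNh : (N:ℝ) * h = l := by rw [hh]; field_simp
  -- σ facts
  have h2p1 : 1 < (2:ℝ)^((1:ℝ)-α) :=
    (Real.one_lt_rpow_iff_of_pos two_pos).2 (Or.inl ⟨one_lt_two, hp0⟩)
  have h2p2 : (2:ℝ)^((1:ℝ)-α) < 2 := by
    calc (2:ℝ)^((1:ℝ)-α) < 2^(1:ℝ) :=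
          Real.rpow_lt_rpow_of_exponent_lt one_lt_two (by linarith)
    _ = 2 := Real.rpow_one 2
  have h3K : 0 < 3 - (2:ℝ)^((1:ℝ)-α) := by linarith
  have hσmul : 1 ≤ σ * (3 - (2:ℝ)^((1:ℝ)-α)) := by
    rw [div_le_iff₀ h3K] at hσ1; linarith
  have hσ0 : 0 < σ := by nlinarith
  have hσhalf : 1/2 ≤ σ := by nlinarith
  have hquad : σ^2 * ((2:ℝ)^((1:ℝ)-α) - 1) ≤ 2*σ - 1 := by
    nlinarith [mul_nonneg (sub_nonneg.2 hσ2) (mul_nonneg hσ0.le (sub_nonneg.2 h2p1.le))]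
  -- weights
  obtain ⟨w, hw⟩ : ∃ w : ℕ → ℝ,
      w = fun m : ℕ => (((m + 1 : ℕ):ℝ) * τ)^(1-α) - (((m : ℕ):ℝ) * τ)^(1-α) := ⟨_, rfl⟩
  have hwm : ∀ m : ℕ, w m = (((m:ℝ)+1)*τ)^(1-α) - ((m:ℝ)*τ)^(1-α) := by
    intro m; rw [hw]; push_cast; ring_nf
  have hw_nonneg : ∀ m, 0 ≤ w m := by
    intro m; rw [hwm]
    have h1 : ((m:ℝ)*τ) ≤ ((m:ℝ)+1)*τ := by nlinarith
    have h2 := Real.rpow_le_rpow (by positivity) h1 hp0.le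
    linarith
  have hw_anti : ∀ m, w (m+1) ≤ w m := by
    intro m
    rw [hwm, hwm]
    push_cast
    have hc := (Real.concaveOn_rpow hp0.le (by linarith : (1:ℝ)-α ≤ 1)).2
      (Set.mem_Ici.2 (by positivity : (0:ℝ) ≤ (m:ℝ)*τ))
      (Set.mem_Ici.2 (by positivity : (0:ℝ) ≤ ((m:ℝ)+2)*τ))
      (by norm_num : (0:ℝ) ≤ 1/2) (by norm_num : (0:ℝ) ≤ 1/2) (by norm_num)
    simp only [smul_eq_mul] at hc
    have hmid : (1/2)*((m:ℝ)*τ) + (1/2)*(((m:ℝ)+2)*τ) = ((m:ℝ)+1)*τ := by ring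
    rw [hmid] at hc
    have h22 : ((m:ℝ)+1+1)*τ = ((m:ℝ)+2)*τ := by ring
    rw [h22]
    linarith
  have hw0 : w 0 = τ^(1-α) := by
    rw [hwm]; simp [Real.zero_rpow hp0.ne']
  have hw1 : w 1 = ((2:ℝ)^((1:ℝ)-α) - 1) * τ^(1-α) := by
    rw [hwm]
    push_cast
    rw [show ((1:ℝ)+1)*τ = 2*τ by ring, show (1:ℝ)*τ = τ by ring,
      Real.mul_rpow (by norm_num) hτ0.le]
    ring
  -- grid functions
  obtain ⟨g, hg⟩ : ∃ g : ℕ → ℝ,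
      g = fun s => ∑ i ∈ Finset.Icc 1 (N-1), h * (y i s)^2 := ⟨_, rfl⟩
  have hgs : ∀ s, g s = ∑ i ∈ Finset.Icc 1 (N-1), h * (y i s)^2 := fun s => by rw [hg]
  obtain ⟨V, hVdef⟩ : ∃ V : ℕ → ℝ, V = fun j' => ∑ i ∈ Finset.Icc 1 N, h *
      (((σ * y i (j' + 1) + (1 - σ) * y i j') -
        (σ * y (i - 1) (j' + 1) + (1 - σ) * y (i - 1) j')) / h) ^ 2 := ⟨_, rfl⟩
  have hV : ∀ j', V j' = ∑ i ∈ Finset.Icc 1 N, h *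
      (((σ * y i (j' + 1) + (1 - σ) * y i j') -
        (σ * y (i - 1) (j' + 1) + (1 - σ) * y (i - 1) j')) / h) ^ 2 := fun j' => by rw [hVdef]
  obtain ⟨Φ, hΦdef⟩ : ∃ Φ : ℕ → ℝ,
      Φ = fun j' => ∑ i ∈ Finset.Icc 1 (N-1), h * (φ i j')^2 := ⟨_, rfl⟩
  have hΦ : ∀ j', Φ j' = ∑ i ∈ Finset.Icc 1 (N-1), h * (φ i j')^2 := fun j' => by rw [hΦdef]
  obtain ⟨X, hXdef⟩ : ∃ X : ℕ → ℝ,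
      X = fun j' => ∑ s ∈ range (j'+1), w (j' - s) * (g (s+1) - g s) := ⟨_, rfl⟩
  have hX : ∀ j', X j' = ∑ s ∈ range (j'+1), w (j' - s) * (g (s+1) - g s) :=
    fun j' => by rw [hXdef]
  -- the per-time-step estimate
  have step : ∀ j' < j₀,
      X j' * (1/(Real.Gamma (2-α) * τ)) + c₁ * V j' ≤ l^2/(2*c₁) * Φ j' := by
    intro j' hj'
    obtain ⟨v, hvf⟩ : ∃ v : ℕ → ℝ,
        v = fun i => σ * y i (j'+1) + (1-σ) * y i j' := ⟨_, rfl⟩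
    have hvi : ∀ i, v i = σ * y i (j'+1) + (1-σ) * y i j' := fun i => by rw [hvf]
    have hv0 : v 0 = 0 := by
      rw [hvi, (hbc j' (by omega)).1, (hbc (j'+1) (by omega)).1]; ring
    have hvN : v N = 0 := by
      rw [hvi, (hbc j' (by omega)).2, (hbc (j'+1) (by omega)).2]; ring
    -- hypotheses for the pointwise caputo lemma
    have hb0' : (0:ℝ) ≤ w (j' - 0) := hw_nonneg _
    have hmono' : ∀ s < j', w (j' - s) ≤ w (j' - (s+1)) := by
      intro s hs
      have e : j' - s = (j' - (s+1)) + 1 := by omega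
      rw [e]; exact hw_anti _
    have hlast' : 1 ≤ j' → σ^2 * w (j' - (j'-1)) ≤ (2*σ-1) * w (j' - j') := by
      intro h1
      have e1 : j' - (j'-1) = 1 := by omega
      have e2 : j' - j' = 0 := by omega
      rw [e1, e2, hw0, hw1]
      have hτp : (0:ℝ) ≤ τ^(1-α) := Real.rpow_nonneg hτ0.le _
      nlinarith [mul_le_mul_of_nonneg_right hquad hτp]
    have cap : ∀ i, (1/2) * ∑ s ∈ range (j'+1), w (j'-s) * ((y i (s+1))^2 - (y i s)^2)
        ≤ ∑ s ∈ range (j'+1), w (j'-s) * (y i (s+1) - y i s) * v i := by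
      intro i
      have hcq := my_caputo_quad (fun s => w (j'-s)) (fun s => y i s) σ j'
        hb0' hmono' hσhalf hlast'
      rw [hvi i]
      exact hcq
    -- sum the pointwise inequality
    have capsum : (1/2) * X j'
        ≤ ∑ i ∈ Finset.Icc 1 (N-1),
            h * (∑ s ∈ range (j'+1), w (j'-s) * (y i (s+1) - y i s) * v i) := by
      have hle := Finset.sum_le_sum
        (fun i (_ : i ∈ Finset.Icc 1 (N-1)) => mul_le_mul_of_nonneg_left (cap i) hh0.le)
      refine le_trans (le_of_eq ?_) hle
      rw [hX]
      calc (1/2) * ∑ s ∈ range (j'+1), w (j'-s) * (g (s+1) - g s)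
          = ∑ s ∈ range (j'+1), ∑ i ∈ Finset.Icc 1 (N-1),
              h * ((1/2) * (w (j'-s) * ((y i (s+1))^2 - (y i s)^2))) := by
            rw [Finset.mul_sum]
            refine sum_congr rfl fun s _ => ?_
            rw [hgs, hgs, ← Finset.sum_sub_distrib, Finset.mul_sum, Finset.mul_sum]
            exact sum_congr rfl fun i _ => by ring
        _ = ∑ i ∈ Finset.Icc 1 (N-1), ∑ s ∈ range (j'+1),
              h * ((1/2) * (w (j'-s) * ((y i (s+1))^2 - (y i s)^2))) := Finset.sum_comm
        _ = ∑ i ∈ Finset.Icc 1 (N-1),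
              h * ((1/2) * ∑ s ∈ range (j'+1), w (j'-s) * ((y i (s+1))^2 - (y i s)^2)) := by
            refine sum_congr rfl fun i _ => ?_
            rw [Finset.mul_sum, Finset.mul_sum]
    -- connect to the scheme
    have hsch : ∀ i ∈ Finset.Icc 1 (N-1),
        ∑ s ∈ range (j'+1), w (j'-s) * (y i (s+1) - y i s) * v i
        = (Real.Gamma (2-α) * τ) * (v i * dCaputo α τ (fun s => y i s) j') := by
      intro i _
      simp only [dCaputo, hw]
      rw [Finset.mul_sum, Finset.mul_sum, Finset.mul_sum]
      refine sum_congr rfl fun s _ => ?_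
      field_simp
    have hsch2 : ∀ i ∈ Finset.Icc 1 (N-1), dCaputo α τ (fun s => y i s) j' =
        ((a (i+1) j' * (v (i+1) - v i)/h - a i j' * (v i - v (i-1))/h)/h
          - d i j' * v i) + φ i j' := by
      intro i hi
      obtain ⟨hi1, hi2⟩ := mem_Icc.1 hi
      rw [hscheme j' hj' i hi1 hi2, hvi (i+1), hvi i, hvi (i-1)]
    -- summation by parts
    obtain ⟨A, hAf⟩ : ∃ A : ℕ → ℝ, A = fun k => a (k+1) j' * (v (k+1) - v k) := ⟨_, rfl⟩
    have hA : ∀ k, A k = a (k+1) j' * (v (k+1) - v k) := fun k => by rw [hAf]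
    have key1 : ∑ i ∈ Finset.Icc 1 (N-1),
        v i * (a (i+1) j' * (v (i+1) - v i) - a i j' * (v i - v (i-1)))
        = - ∑ i ∈ Finset.Icc 1 N, a i j' * (v i - v (i-1))^2 := by
      rw [my_Icc_sum, my_Icc_sum]
      have e1 : ∀ k, v (k+1) * (a (k+1+1) j' * (v (k+1+1) - v (k+1))
            - a (k+1) j' * (v (k+1) - v (k+1-1)))
          = v (k+1) * (A (k+1) - A k) := by
        intro k
        rw [hA (k+1), hA k, Nat.add_sub_cancel]
      have e2 : ∀ k, a (k+1) j' * (v (k+1) - v (k+1-1))^2 = (v (k+1) - v k) * A k := by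
        intro k
        rw [hA k, Nat.add_sub_cancel]; ring
      rw [sum_congr rfl (fun k _ => e1 k), sum_congr rfl (fun k _ => e2 k)]
      have hsbp := my_sbp v A (N-1)
      have eN : N - 1 + 1 = N := by omega
      rw [eN] at hsbp
      rw [hvN, hv0] at hsbp
      linarith [hsbp]
    -- the energy splitting
    have hsplit : ∑ i ∈ Finset.Icc 1 (N-1),
        h * (v i * (((a (i+1) j' * (v (i+1) - v i)/h - a i j' * (v i - v (i-1))/h)/h
          - d i j' * v i) + φ i j'))
        = (∑ i ∈ Finset.Icc 1 (N-1),
            v i * (a (i+1) j' * (v (i+1) - v i) - a i j' * (v i - v (i-1))))/h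
          - (∑ i ∈ Finset.Icc 1 (N-1), h * (d i j' * (v i)^2))
          + (∑ i ∈ Finset.Icc 1 (N-1), h * (v i * φ i j')) := by
      rw [Finset.sum_div, ← Finset.sum_sub_distrib, ← Finset.sum_add_distrib]
      refine sum_congr rfl fun i _ => ?_
      field_simp
    -- bound the diffusion term
    have bound1 : c₁ * V j' ≤ (∑ i ∈ Finset.Icc 1 N, a i j' * (v i - v (i-1))^2)/h := by
      rw [hV j', Finset.mul_sum, Finset.sum_div]
      refine Finset.sum_le_sum fun i hi => ?_
      obtain ⟨hi1, hi2⟩ := mem_Icc.1 hi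
      have haik := ha j' hj' i hi1 hi2
      have hvv : (σ * y i (j' + 1) + (1 - σ) * y i j') -
          (σ * y (i - 1) (j' + 1) + (1 - σ) * y (i - 1) j') = v i - v (i-1) := by
        rw [hvi i, hvi (i-1)]
      rw [hvv]
      have e : h * ((v i - v (i-1))/h)^2 = (v i - v (i-1))^2/h := by
        field_simp
      rw [e]
      calc c₁ * ((v i - v (i-1))^2/h) ≤ a i j' * ((v i - v (i-1))^2/h) :=
            mul_le_mul_of_nonneg_right haik (by positivity)
      _ = a i j' * (v i - v (i-1))^2/h := by ring
    -- bound the reaction term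
    have bound2 : 0 ≤ ∑ i ∈ Finset.Icc 1 (N-1), h * (d i j' * (v i)^2) := by
      refine Finset.sum_nonneg fun i hi => ?_
      obtain ⟨hi1, hi2⟩ := mem_Icc.1 hi
      have := hd j' hj' i hi1 hi2
      positivity
    -- Poincaré inequality
    obtain ⟨S, hSf⟩ : ∃ S : ℝ, S = ∑ m ∈ range N, (v (m+1) - v m)^2 := ⟨_, rfl⟩
    have hS0 : 0 ≤ S := by rw [hSf]; exact sum_nonneg fun m _ => sq_nonneg _
    have hVS : V j' = S / h := by
      rw [hV j', my_Icc_sum, hSf, Finset.sum_div]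
      refine sum_congr rfl fun k _ => ?_
      have hvv : (σ * y (k+1) (j' + 1) + (1 - σ) * y (k+1) j') -
          (σ * y (k+1-1) (j' + 1) + (1 - σ) * y (k+1-1) j') = v (k+1) - v (k+1-1) := by
        rw [hvi (k+1), hvi (k+1-1)]
      rw [hvv, Nat.add_sub_cancel]
      field_simp
    have htel : ∀ k, v (k+1) = ∑ m ∈ range (k+1), (v (m+1) - v m) := by
      intro k
      rw [Finset.sum_range_sub v (k+1), hv0, sub_zero]
    have hCS : ∀ k, k < N - 1 → (v (k+1))^2 ≤ ((k:ℝ)+1) * S := by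
      intro k hk
      have cs := Finset.sum_mul_sq_le_sq_mul_sq (range (k+1)) (fun _ => (1:ℝ))
        (fun m => v (m+1) - v m)
      simp only [one_mul, one_pow] at cs
      rw [Finset.sum_const, card_range, nsmul_eq_mul] at cs
      have hsub : ∑ m ∈ range (k+1), (v (m+1) - v m)^2 ≤ S := by
        rw [hSf]
        refine Finset.sum_le_sum_of_subset_of_nonneg ?_ (fun _ _ _ => sq_nonneg _)
        intro x hx
        rw [mem_range] at *
        omega
      rw [htel k]
      push_cast at cs
      calc (∑ m ∈ range (k+1), (v (m+1) - v m))^2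
          ≤ ((k:ℝ)+1) * ∑ m ∈ range (k+1), (v (m+1) - v m)^2 := by linarith [cs]
      _ ≤ ((k:ℝ)+1) * S := by
            apply mul_le_mul_of_nonneg_left hsub
            positivity
    have poincare : ∑ i ∈ Finset.Icc 1 (N-1), h * (v i)^2 ≤ (l^2/2) * V j' := by
      have hcast : ((N-1:ℕ):ℝ) = (N:ℝ) - 1 := by
        have : (1:ℕ) ≤ N := by omega
        push_cast [Nat.cast_sub this]
        ring
      calc ∑ i ∈ Finset.Icc 1 (N-1), h * (v i)^2
          = ∑ k ∈ range (N-1), h * (v (k+1))^2 := my_Icc_sum _ _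
        _ ≤ ∑ k ∈ range (N-1), h * (((k:ℝ)+1) * S) := by
            refine sum_le_sum fun k hk => ?_
            exact mul_le_mul_of_nonneg_left (hCS k (mem_range.1 hk)) hh0.le
        _ = (h*S) * ∑ k ∈ range (N-1), ((k:ℝ)+1) := by
            rw [Finset.mul_sum]
            exact sum_congr rfl fun k _ => by ring
        _ = (h*S) * (((N-1:ℕ):ℝ) * (((N-1:ℕ):ℝ)+1)/2) := by rw [my_gauss]
        _ ≤ (l^2/2) * (S/h) := by
            rw [hcast, ← hNh]
            have e : (((N:ℝ)*h)^2/2) * (S/h) = ((N:ℝ)^2*h*S)/2 := by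
              field_simp
            rw [e]
            nlinarith [mul_nonneg hh0.le hS0, hN0]
        _ = (l^2/2) * V j' := by rw [hVS]
    -- source term bound
    have bound3 : ∑ i ∈ Finset.Icc 1 (N-1), h * (v i * φ i j')
        ≤ (c₁/l^2) * (∑ i ∈ Finset.Icc 1 (N-1), h * (v i)^2) + (l^2/(4*c₁)) * Φ j' := by
      rw [hΦ, Finset.mul_sum, Finset.mul_sum, ← Finset.sum_add_distrib]
      refine Finset.sum_le_sum fun i _ => ?_
      have hkey : v i * φ i j' ≤ (c₁/l^2)*(v i)^2 + (l^2/(4*c₁))*(φ i j')^2 := by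
        rw [← sub_nonneg]
        have expand : (c₁/l^2)*(v i)^2 + (l^2/(4*c₁))*(φ i j')^2 - v i * φ i j'
            = (2*c₁*v i - l^2*φ i j')^2 / (4*c₁*l^2) := by
          field_simp
          ring
        rw [expand]
        positivity
      calc h * (v i * φ i j') ≤ h * ((c₁/l^2)*(v i)^2 + (l^2/(4*c₁))*(φ i j')^2) :=
            mul_le_mul_of_nonneg_left hkey hh0.le
      _ = (c₁/l^2) * (h*(v i)^2) + (l^2/(4*c₁)) * (h*(φ i j')^2) := by ring
    -- assemble the per-step estimate
    have poin2 : (c₁/l^2) * (∑ i ∈ Finset.Icc 1 (N-1), h * (v i)^2) ≤ (c₁/2) * V j' := by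
      calc (c₁/l^2) * (∑ i ∈ Finset.Icc 1 (N-1), h * (v i)^2)
          ≤ (c₁/l^2) * ((l^2/2) * V j') :=
            mul_le_mul_of_nonneg_left poincare (by positivity)
      _ = (c₁/2) * V j' := by
            field_simp
    have main1 : (1/2) * X j' ≤ (Real.Gamma (2-α) * τ) *
        (- (c₁ * V j') + ((c₁/2) * V j' + (l^2/(4*c₁)) * Φ j')) := by
      have e1 : ∑ i ∈ Finset.Icc 1 (N-1),
            h * (∑ s ∈ range (j'+1), w (j'-s) * (y i (s+1) - y i s) * v i)
          = (Real.Gamma (2-α) * τ) * ∑ i ∈ Finset.Icc 1 (N-1),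
              h * (v i * (((a (i+1) j' * (v (i+1) - v i)/h - a i j' * (v i - v (i-1))/h)/h
                - d i j' * v i) + φ i j')) := by
        rw [Finset.mul_sum]
        refine sum_congr rfl fun i hi => ?_
        rw [hsch i hi, hsch2 i hi]
        ring
      have e2 : ∑ i ∈ Finset.Icc 1 (N-1),
            h * (v i * (((a (i+1) j' * (v (i+1) - v i)/h - a i j' * (v i - v (i-1))/h)/h
              - d i j' * v i) + φ i j'))
          ≤ - (c₁ * V j') + ((c₁/2) * V j' + (l^2/(4*c₁)) * Φ j') := by
        rw [hsplit, key1]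
        have b1 : (- ∑ i ∈ Finset.Icc 1 N, a i j' * (v i - v (i-1))^2)/h ≤ - (c₁ * V j') := by
          rw [neg_div]
          linarith [bound1]
        linarith [b1, bound2, bound3, poin2]
      calc (1/2) * X j' ≤ ∑ i ∈ Finset.Icc 1 (N-1),
            h * (∑ s ∈ range (j'+1), w (j'-s) * (y i (s+1) - y i s) * v i) := capsum
      _ = (Real.Gamma (2-α) * τ) * ∑ i ∈ Finset.Icc 1 (N-1),
            h * (v i * (((a (i+1) j' * (v (i+1) - v i)/h - a i j' * (v i - v (i-1))/h)/h
              - d i j' * v i) + φ i j')) := e1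
      _ ≤ (Real.Gamma (2-α) * τ) *
            (- (c₁ * V j') + ((c₁/2) * V j' + (l^2/(4*c₁)) * Φ j')) := by
          apply mul_le_mul_of_nonneg_left e2 (by positivity)
    -- conclude
    have hGτ : 0 < Real.Gamma (2-α) * τ := by positivity
    have hdiv : X j' * (1/(Real.Gamma (2-α) * τ))
        ≤ 2 * (- (c₁ * V j') + ((c₁/2) * V j' + (l^2/(4*c₁)) * Φ j')) := by
      rw [mul_one_div, div_le_iff₀ hGτ]
      nlinarith [main1]
    have e3 : l^2/(2*c₁) = 2*(l^2/(4*c₁)) := by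
      field_simp
      ring
    rw [e3]
    linarith [hdiv]
  -- sum over time levels
  have summed := Finset.sum_le_sum
    (fun j' (hj'' : j' ∈ range (j+1)) =>
      mul_le_mul_of_nonneg_right (step j' (by have := mem_range.1 hj''; omega)) hτ0.le)
  have lhs_eq : ∑ j' ∈ range (j+1), ((X j' * (1/(Real.Gamma (2-α) * τ)) + c₁ * V j') * τ)
      = (1/Real.Gamma (2-α)) * (∑ j' ∈ range (j+1), X j')
        + c₁ * ∑ j' ∈ range (j+1), (V j' * τ) := by
    rw [Finset.mul_sum, Finset.mul_sum, ← Finset.sum_add_distrib]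
    refine sum_congr rfl fun j' _ => ?_
    field_simp
  have rhs_eq : ∑ j' ∈ range (j+1), (l^2/(2*c₁) * Φ j' * τ)
      = l^2/(2*c₁) * ∑ j' ∈ range (j+1), (Φ j' * τ) := by
    rw [Finset.mul_sum]
    exact sum_congr rfl fun j' _ => by ring
  rw [lhs_eq] at summed
  rw [rhs_eq] at summed
  have htime : ∑ j' ∈ range (j+1), X j'
      = (∑ s ∈ range (j+1), w (j - s) * g (s+1)) - (∑ j' ∈ range (j+1), w j') * g 0 := by
    rw [sum_congr rfl fun j' _ => hX j']
    exact my_time_identity w g j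
  have hWsum : ∑ j' ∈ range (j+1), w j' = (((j + 1 : ℕ):ℝ) * τ)^(1-α) := by
    have e : ∀ m : ℕ, w m = (fun k : ℕ => ((k:ℝ)*τ)^(1-α)) (m+1)
        - (fun k : ℕ => ((k:ℝ)*τ)^(1-α)) m := by
      intro m
      rw [hwm]
      push_cast
      ring_nf
    rw [sum_congr rfl fun m _ => e m, Finset.sum_range_sub (fun k : ℕ => ((k:ℝ)*τ)^(1-α))]
    push_cast
    rw [show (0:ℝ)*τ = 0 by ring, Real.zero_rpow hp0.ne']
    ring_nf
  have hg0 : g 0 = ∑ i ∈ Finset.Icc 1 (N-1), h * (u₀ ((i:ℝ) * h))^2 := by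
    rw [hgs]
    refine sum_congr rfl fun i hi => ?_
    obtain ⟨_, hi2⟩ := mem_Icc.1 hi
    rw [hic i (by omega)]
  rw [htime, hWsum, hg0] at summed
  -- final matching with the goal
  have master : (1/Real.Gamma (2-α)) * (∑ s ∈ range (j+1), w (j - s) * g (s+1))
      + c₁ * ∑ j' ∈ range (j+1), (V j' * τ)
      ≤ l^2/(2*c₁) * ∑ j' ∈ range (j+1), (Φ j' * τ)
        + ((((j + 1 : ℕ):ℝ) * τ)^(1-α) / Real.Gamma (2-α))
          * (∑ i ∈ Finset.Icc 1 (N-1), h * (u₀ ((i:ℝ) * h))^2) := by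
    have expand : (1/Real.Gamma (2-α)) * ((∑ s ∈ range (j+1), w (j - s) * g (s+1))
        - (((j + 1 : ℕ):ℝ) * τ)^(1-α) * (∑ i ∈ Finset.Icc 1 (N-1), h * (u₀ ((i:ℝ) * h))^2))
        = (1/Real.Gamma (2-α)) * (∑ s ∈ range (j+1), w (j - s) * g (s+1))
          - ((((j + 1 : ℕ):ℝ) * τ)^(1-α) / Real.Gamma (2-α))
            * (∑ i ∈ Finset.Icc 1 (N-1), h * (u₀ ((i:ℝ) * h))^2) := by
      ring
    linarith [summed, expand.symm.le, expand.le]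
  simp only [hw, hg, hVdef, hΦdef] at master
  exact master
end
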